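/- arXiv:2508.19458 — 3 statements merged into one kernel-verified Lean document; each statement's English description precedes it below -/
import Mathlib

section
/- Let a ≥ 0, r ≥ 0, and let k > 4 be an integer, and Y ~ χ²(k). Then both KL(a + Y ‖ (1+r)Y) and KL(a + (1+r)Y ‖ Y) are at most a²/(2k-8) + kr²/4 + ar/2. -/
open MeasureTheory ProbabilityTheory

/-- Kullback–Leibler divergence of `P` with respect to `Q`, as the integral of the
logarithm of the Radon–Nikodym derivative. -/
noncomputable def klDiv (P Q : Measure ℝ) : ℝ :=
  ∫ x, Real.log ((P.rnDeriv Q x).toReal) ∂P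

/-- The chi-squared distribution with `k` degrees of freedom, i.e. the Gamma
distribution with shape `k/2` and rate `1/2`. -/
noncomputable def chiSquared (k : ℕ) : Measure ℝ :=
  gammaMeasure ((k : ℝ) / 2) (1 / 2)

open Real Set
open scoped ENNReal NNReal

set_option maxHeartbeats 1000000


lemma aux_log_lb {t : ℝ} (ht : 0 ≤ t) : t - t^2/2 ≤ Real.log (1+t) := by
  set f : ℝ → ℝ := fun x => Real.log (1+x) - (x - x^2/2) with hf
  have hd : ∀ x : ℝ, 0 ≤ x → HasDerivAt f (1/(1+x) - (1 - x)) x := by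
    intro x hx
    have h1 : HasDerivAt (fun x : ℝ => 1 + x) 1 x := by
      simpa using (hasDerivAt_id x).const_add 1
    have h2 : HasDerivAt (fun x : ℝ => Real.log (1+x)) (1/(1+x)) x :=
      h1.log (by positivity)
    have h3 : HasDerivAt (fun x : ℝ => x - x^2/2) (1 - x) x := by
      have h4 := ((hasDerivAt_pow 2 x).div_const 2)
      simpa [Pi.sub_def] using (hasDerivAt_id x).sub h4
    simpa [Pi.sub_def, hf] using h2.sub h3
  have mono : MonotoneOn f (Set.Ici 0) := by
    apply monotoneOn_of_deriv_nonneg (convex_Ici 0)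
    · intro x hx
      exact (hd x hx).differentiableAt.continuousAt.continuousWithinAt
    · intro x hx
      rw [interior_Ici] at hx
      exact (hd x (le_of_lt hx)).differentiableAt.differentiableWithinAt
    · intro x hx
      rw [interior_Ici, mem_Ioi] at hx
      rw [(hd x hx.le).deriv]
      have h0 : (0:ℝ) < 1 + x := by linarith
      rw [sub_nonneg, le_div_iff₀ h0]
      nlinarith [sq_nonneg x]
  have h := mono (Set.self_mem_Ici) ht ht
  simp only [hf] at h
  simp only [add_zero, Real.log_one] at h
  linarith

lemma aux_log_ub {t : ℝ} (ht : 0 ≤ t) : Real.log (1+t) ≤ t/(1+t) + t^2/2 := by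
  set f : ℝ → ℝ := fun x => (x/(1+x) + x^2/2) - Real.log (1+x) with hf
  have hd : ∀ x : ℝ, 0 ≤ x → HasDerivAt f ((1/(1+x)^2 + x) - 1/(1+x)) x := by
    intro x hx
    have hne : (1:ℝ) + x ≠ 0 := by positivity
    have h1 : HasDerivAt (fun x : ℝ => 1 + x) 1 x := by
      simpa using (hasDerivAt_id x).const_add 1
    have h2 : HasDerivAt (fun x : ℝ => x / (1+x)) ((1*(1+x) - x*1)/(1+x)^2) x :=
      (hasDerivAt_id x).div h1 hne
    have h2' : HasDerivAt (fun x : ℝ => x / (1+x)) (1/(1+x)^2) x := by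
      convert h2 using 1; ring
    have h3 : HasDerivAt (fun x : ℝ => x^2/2) x x := by
      have h4 := ((hasDerivAt_pow 2 x).div_const 2)
      simpa using h4
    have h5 : HasDerivAt (fun x : ℝ => Real.log (1+x)) (1/(1+x)) x := h1.log hne
    simpa [Pi.sub_def, Pi.add_def, hf] using (h2'.add h3).sub h5
  have mono : MonotoneOn f (Set.Ici 0) := by
    apply monotoneOn_of_deriv_nonneg (convex_Ici 0)
    · intro x hx
      exact (hd x hx).differentiableAt.continuousAt.continuousWithinAt
    · intro x hx
      rw [interior_Ici] at hx
      exact (hd x (le_of_lt hx)).differentiableAt.differentiableWithinAt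
    · intro x hx
      rw [interior_Ici, mem_Ioi] at hx
      rw [(hd x hx.le).deriv]
      have h0 : (0:ℝ) < 1 + x := by linarith
      have e : 1/(1+x)^2 + x - 1/(1+x) = x*((1+x)^2 - 1)/(1+x)^2 := by
        field_simp; ring
      rw [sub_nonneg] at *
      rw [← sub_nonneg, e]
      apply div_nonneg _ (by positivity)
      nlinarith [sq_nonneg x, mul_pos hx hx]
  have h := mono (Set.self_mem_Ici) ht ht
  simp only [hf] at h
  simp only [add_zero, Real.log_one, zero_div] at h
  linarith

lemma gammaMeasure_eq_withDensity_nn (α β : ℝ) :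
    gammaMeasure α β
      = volume.withDensity (fun x => (((gammaPDFReal α β x).toNNReal : ℝ≥0) : ℝ≥0∞)) := rfl

lemma gamma_moment {α β s : ℝ} {g : ℝ → ℝ} (hα : 1 < α) (hβ : 0 < β) (hs : 0 < α + s)
    (hg : Measurable g) (hgs : ∀ y : ℝ, 0 < y → g y = y ^ s) :
    Integrable g (gammaMeasure α β) ∧
      ∫ y, g y ∂(gammaMeasure α β) = Real.Gamma (α+s) / (Real.Gamma α * β ^ s) := by
  have hΓ : 0 < Real.Gamma α := Real.Gamma_pos_of_pos (by linarith)
  have h0 : gammaPDFReal α β 0 = 0 := by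
    simp [gammaPDFReal, Real.zero_rpow (show α - 1 ≠ 0 by intro h; linarith [sub_eq_zero.mp h])]
  have fmeas : Measurable (fun x => (gammaPDFReal α β x).toNNReal) :=
    (measurable_gammaPDFReal α β).real_toNNReal
  have key : (fun x => ((gammaPDFReal α β x).toNNReal : ℝ) • g x)
      = Set.indicator (Ioi 0) (fun x => β^α / Real.Gamma α * (x^(α+s-1) * Real.exp (-(β*x)))) := by
    funext x
    rcases lt_trichotomy x 0 with hx | hx | hx
    · rw [Set.indicator_of_notMem (by simp [hx.not_gt])]
      simp [gammaPDFReal, not_le.mpr hx]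
    · subst hx
      rw [Set.indicator_of_notMem (by simp)]
      simp [h0]
    · rw [Set.indicator_of_mem (Set.mem_Ioi.mpr hx)]
      rw [smul_eq_mul, Real.coe_toNNReal _ (gammaPDFReal_nonneg (by linarith) hβ x), hgs x hx]
      simp only [gammaPDFReal, if_pos hx.le]
      rw [show α + s - 1 = (α - 1) + s by ring, Real.rpow_add hx]
      ring
  have hio : IntegrableOn (fun x : ℝ => β^α / Real.Gamma α * (x^(α+s-1) * Real.exp (-(β*x))))
      (Ioi 0) volume := by
    have h2 := integrableOn_rpow_mul_exp_neg_mul_rpow (p := 1) (s := α + s - 1) (b := β)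
      (by linarith) one_pos hβ
    have h1 : IntegrableOn (fun x : ℝ => x^(α+s-1) * Real.exp (-(β*x))) (Ioi 0) volume := by
      apply h2.congr_fun ?_ measurableSet_Ioi
      intro x hx
      simp [Real.rpow_one]
    exact h1.const_mul _
  have hint : Integrable (fun x => ((gammaPDFReal α β x).toNNReal : ℝ) • g x) volume := by
    rw [key]
    exact hio.integrable_indicator measurableSet_Ioi
  constructor
  · rw [gammaMeasure_eq_withDensity_nn, integrable_withDensity_iff_integrable_smul fmeas]
    exact hint
  · rw [gammaMeasure_eq_withDensity_nn, integral_withDensity_eq_integral_smul fmeas]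
    have : ∫ x, ((gammaPDFReal α β x).toNNReal : ℝ) • g x
        = ∫ x in Ioi 0, β^α / Real.Gamma α * (x^(α+s-1) * Real.exp (-(β*x))) := by
      rw [key, integral_indicator measurableSet_Ioi]
    rw [show (fun x => (gammaPDFReal α β x).toNNReal • g x) = fun x => ((gammaPDFReal α β x).toNNReal : ℝ) • g x from rfl]
    rw [this, integral_const_mul]
    rw [show (α + s - 1) = (α + s) - 1 by ring,
      integral_rpow_mul_exp_neg_mul_Ioi hs hβ]
    rw [one_div, Real.inv_rpow hβ.le]
    have hβs : β ^ α * β ^ s = β ^ (α + s) := (Real.rpow_add hβ α s).symm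
    have p1 : (0:ℝ) < β ^ (α + s) := Real.rpow_pos_of_pos hβ _
    have p2 : (0:ℝ) < β ^ α := Real.rpow_pos_of_pos hβ _
    have p3 : (0:ℝ) < β ^ s := Real.rpow_pos_of_pos hβ _
    field_simp
    rw [← hβs]

section moments
variable {k : ℕ} (hk : 4 < k)

lemma alpha_gt (hk : 4 < k) : 2 < (k:ℝ)/2 := by
  have : (5:ℝ) ≤ k := by exact_mod_cast hk
  linarith

lemma chiSq_moment_one (hk : 4 < k) :
    Integrable (fun y : ℝ => y) (chiSquared k) ∧ ∫ y, y ∂(chiSquared k) = (k:ℝ) := by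
  have hα := alpha_gt hk
  set α := (k:ℝ)/2
  have hΓ : (0:ℝ) < Real.Gamma α := Real.Gamma_pos_of_pos (by linarith)
  obtain ⟨h1, h2⟩ := gamma_moment (α := α) (β := 1/2) (s := 1) (g := fun y => y)
    (by linarith) one_half_pos (by linarith) measurable_id
    (fun y _ => (Real.rpow_one y).symm)
  refine ⟨h1, ?_⟩
  rw [chiSquared] at *
  rw [h2, Real.Gamma_add_one (by linarith), Real.rpow_one]
  field_simp
  ring

lemma chiSq_moment_inv (hk : 4 < k) :
    Integrable (fun y : ℝ => y⁻¹) (chiSquared k) ∧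
      ∫ y, y⁻¹ ∂(chiSquared k) = 1/((k:ℝ)-2) := by
  have hα := alpha_gt hk
  set α := (k:ℝ)/2 with hαdef
  have hΓ : (0:ℝ) < Real.Gamma (α-1) := Real.Gamma_pos_of_pos (by linarith)
  obtain ⟨h1, h2⟩ := gamma_moment (α := α) (β := 1/2) (s := -1) (g := fun y => y⁻¹)
    (by linarith) one_half_pos (by linarith) measurable_inv
    (fun y hy => (Real.rpow_neg_one y).symm)
  refine ⟨h1, ?_⟩
  rw [chiSquared] at *
  rw [h2]
  have e1 : α + (-1) = α - 1 := by ring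
  have e2 : Real.Gamma α = (α-1) * Real.Gamma (α-1) := by
    have h := Real.Gamma_add_one (show α - 1 ≠ 0 by intro h; linarith [sub_eq_zero.mp h])
    rw [show α - 1 + 1 = α by ring] at h
    exact h
  have e3 : ((1:ℝ)/2) ^ (-1:ℝ) = 2 := by
    rw [Real.rpow_neg_one]; norm_num
  rw [e1, e2, e3]
  have hk2 : (k:ℝ) - 2 = 2*(α-1) := by rw [hαdef]; ring
  rw [hk2]
  have hα1 : (0:ℝ) < α - 1 := by linarith
  rw [div_eq_div_iff (by positivity) (by positivity)]
  ring

lemma chiSq_moment_inv_sq (hk : 4 < k) :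
    Integrable (fun y : ℝ => y⁻¹^2) (chiSquared k) ∧
      ∫ y, y⁻¹^2 ∂(chiSquared k) = 1/(((k:ℝ)-2)*((k:ℝ)-4)) := by
  have hα := alpha_gt hk
  set α := (k:ℝ)/2 with hαdef
  have hΓ : (0:ℝ) < Real.Gamma (α-2) := Real.Gamma_pos_of_pos (by linarith)
  obtain ⟨h1, h2⟩ := gamma_moment (α := α) (β := 1/2) (s := -2) (g := fun y => y⁻¹^2)
    (by linarith) one_half_pos (by linarith) (measurable_inv.pow_const 2)
    (fun y hy => by
      rw [Real.rpow_neg hy.le, show ((2:ℝ)) = ((2:ℕ):ℝ) by norm_num, Real.rpow_natCast]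
      simp [inv_pow])
  refine ⟨h1, ?_⟩
  rw [chiSquared] at *
  rw [h2]
  have e1 : α + (-2) = α - 2 := by ring
  have e2 : Real.Gamma α = (α-1) * ((α-2) * Real.Gamma (α-2)) := by
    have h1 := Real.Gamma_add_one (show α - 1 ≠ 0 by intro h; linarith [sub_eq_zero.mp h])
    have h2 := Real.Gamma_add_one (show α - 2 ≠ 0 by intro h; linarith [sub_eq_zero.mp h])
    rw [show α - 1 + 1 = α by ring] at h1
    rw [show α - 2 + 1 = α - 1 by ring] at h2
    rw [h1, h2]
  have e3 : ((1:ℝ)/2) ^ (-2:ℝ) = 4 := by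
    rw [show (-2:ℝ) = ((-2:ℤ):ℝ) by norm_num, Real.rpow_intCast]; norm_num
  rw [e1, e2, e3]
  have hk2 : (k:ℝ) - 2 = 2*(α-1) := by rw [hαdef]; ring
  have hk4 : (k:ℝ) - 4 = 2*(α-2) := by rw [hαdef]; ring
  rw [hk2, hk4]
  have hα1 : (0:ℝ) < α - 1 := by linarith
  have hα2 : (0:ℝ) < α - 2 := by linarith
  rw [div_eq_div_iff (by positivity) (by positivity)]
  ring

lemma gammaPDF_nonpos_eq_zero {α β x : ℝ} (hα : 1 < α) (hx : x ≤ 0) :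
    gammaPDF α β x = 0 := by
  rcases lt_or_eq_of_le hx with h | h
  · exact gammaPDF_of_neg h
  · subst h
    rw [gammaPDF_of_nonneg le_rfl]
    simp [Real.zero_rpow (show α - 1 ≠ 0 by intro h; linarith [sub_eq_zero.mp h])]

lemma chiSq_ae_pos (hk : 4 < k) : ∀ᵐ y ∂(chiSquared k), 0 < y := by
  have hα := alpha_gt hk
  rw [ae_iff]
  have hset : {y : ℝ | ¬ 0 < y} = Iic 0 := by ext y; simp [not_lt]
  rw [hset, chiSquared, gammaMeasure, withDensity_apply _ measurableSet_Iic]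
  rw [setLIntegral_congr_fun_ae measurableSet_Iic
    (ae_of_all _ fun x hx => gammaPDF_nonpos_eq_zero (by linarith) hx), lintegral_zero]

lemma chiSq_prob (hk : 4 < k) : IsProbabilityMeasure (chiSquared k) := by
  rw [chiSquared]
  have h : (0:ℝ) < (k:ℝ)/2 := by linarith [alpha_gt hk]
  exact isProbabilityMeasure_gammaMeasure h one_half_pos

end moments

lemma gammaPDF_nonpos_eq_zero' {α β x : ℝ} (hα : 1 < α) (hx : x ≤ 0) :
    gammaPDF α β x = 0 := by
  rcases lt_or_eq_of_le hx with h | h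
  · exact gammaPDF_of_neg h
  · subst h
    rw [gammaPDF_of_nonneg le_rfl]
    simp [Real.zero_rpow (show α - 1 ≠ 0 by intro h; linarith [sub_eq_zero.mp h])]

/-- mapping a withDensity measure through a measurable equivalence -/
lemma withDensity_map_equiv (μ : Measure ℝ) (e : ℝ ≃ᵐ ℝ) {g : ℝ → ℝ≥0∞} (hg : Measurable g) :
    (μ.withDensity g).map e = (μ.map e).withDensity (fun x => g (e.symm x)) := by
  ext s hs
  rw [Measure.map_apply e.measurable hs, withDensity_apply _ (e.measurable hs),
    withDensity_apply _ hs,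
    setLIntegral_map hs (show Measurable fun x => g (e.symm x) from hg.comp e.symm.measurable)
      e.measurable]
  refine setLIntegral_congr_fun_ae (e.measurable hs) (ae_of_all _ fun y _ => ?_)
  rw [e.symm_apply_apply]

noncomputable def affEquiv (b c : ℝ) (hc : c ≠ 0) : ℝ ≃ᵐ ℝ :=
  ((Homeomorph.mulLeft₀ c hc).trans (Homeomorph.addLeft b)).toMeasurableEquiv

lemma affEquiv_apply (b c : ℝ) (hc : c ≠ 0) (y : ℝ) : affEquiv b c hc y = b + c * y := rfl

lemma affEquiv_symm_apply (b c : ℝ) (hc : c ≠ 0) (x : ℝ) :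
    (affEquiv b c hc).symm x = c⁻¹ * (-b + x) := rfl

lemma map_volume_affEquiv {b c : ℝ} (hc : 0 < c) :
    volume.map (affEquiv b c hc.ne') = ENNReal.ofReal c⁻¹ • volume := by
  have hco : ⇑(affEquiv b c hc.ne') = (fun x => b + x) ∘ (fun y => c * y) := by
    funext y; rfl
  rw [hco, ← Measure.map_map (measurable_const_add b) (measurable_const_mul c),
    Real.map_volume_mul_left hc.ne', Measure.map_smul, map_add_left_eq_self,
    abs_of_pos (inv_pos.mpr hc)]

/-- the mapped gamma measure as a density over `volume.restrict (Ioi 0)` -/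
lemma map_gamma_affine {α β b c : ℝ} (hα : 1 < α) (hb : 0 ≤ b) (hc : 0 < c) :
    (gammaMeasure α β).map (fun y => b + c * y)
      = (volume.restrict (Ioi 0)).withDensity
          (fun x => ENNReal.ofReal c⁻¹ * gammaPDF α β ((x - b)/c)) := by
  have hmg : Measurable (gammaPDF α β) :=
    (measurable_gammaPDFReal α β).ennreal_ofReal
  have h1 : (gammaMeasure α β).map (fun y => b + c * y)
      = (gammaMeasure α β).map (affEquiv b c hc.ne') := by
    congr 1
  rw [h1, gammaMeasure, withDensity_map_equiv _ _ hmg, map_volume_affEquiv hc,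
    withDensity_smul_measure]
  have h2 : (fun x => gammaPDF α β ((affEquiv b c hc.ne').symm x))
      = fun x => gammaPDF α β ((x - b)/c) := by
    funext x
    rw [affEquiv_symm_apply]
    congr 1
    field_simp
    ring
  have hD : Measurable fun x : ℝ => gammaPDF α β ((x - b)/c) := hmg.comp (by fun_prop)
  rw [h2, ← withDensity_smul _ hD]
  have h3 : (ENNReal.ofReal c⁻¹ • fun x => gammaPDF α β ((x - b)/c))
      = Set.indicator (Ioi 0) (fun x => ENNReal.ofReal c⁻¹ * gammaPDF α β ((x - b)/c)) := by
    funext x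
    by_cases hx : x ∈ Ioi 0
    · rw [Set.indicator_of_mem hx]; rfl
    · rw [Set.indicator_of_notMem hx]
      have hx' : x ≤ 0 := not_lt.mp hx
      have : (x - b)/c ≤ 0 := div_nonpos_of_nonpos_of_nonneg (by linarith) hc.le
      simp [Pi.smul_apply, gammaPDF_nonpos_eq_zero' hα this]
  rw [h3, withDensity_indicator measurableSet_Ioi]

lemma rnDeriv_withDensity_pair (μ : Measure ℝ) [SigmaFinite μ] {p q : ℝ → ℝ≥0∞}
    (hp : Measurable p) (hq : Measurable q) (hp_top : ∀ᵐ x ∂μ, p x ≠ ∞)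
    (hq0 : ∀ᵐ x ∂μ, q x ≠ 0) (hq_top : ∀ᵐ x ∂μ, q x ≠ ∞) :
    (μ.withDensity p).rnDeriv (μ.withDensity q) =ᵐ[μ] fun x => (q x)⁻¹ * p x := by
  have : SigmaFinite (μ.withDensity p) := SigmaFinite.withDensity_of_ne_top hp_top
  have h1 := Measure.rnDeriv_withDensity_right (μ.withDensity p) μ hq.aemeasurable hq0 hq_top
  have h2 := Measure.rnDeriv_withDensity μ hp
  filter_upwards [h1, h2] with x hx1 hx2
  rw [hx1, hx2]

lemma log_gammaPDFReal {α t : ℝ} (hα : 1 < α) (ht : 0 < t) :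
    Real.log (gammaPDFReal α (1/2) t)
      = Real.log (((1:ℝ)/2)^α / Real.Gamma α) + (α - 1) * Real.log t - t/2 := by
  have hΓ : (0:ℝ) < Real.Gamma α := Real.Gamma_pos_of_pos (by linarith)
  have hC : ((1:ℝ)/2)^α / Real.Gamma α ≠ 0 := by positivity
  have htp : t ^ (α - 1) ≠ 0 := (Real.rpow_pos_of_pos ht _).ne'
  simp only [gammaPDFReal, if_pos ht.le]
  rw [Real.log_mul (mul_ne_zero hC htp) (Real.exp_ne_zero _), Real.log_mul hC htp,
    Real.log_rpow ht, Real.log_exp]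
  ring

lemma klDiv_affine_eq (k : ℕ) (hk : 4 < k) {b c c' : ℝ} (hb : 0 ≤ b) (hc : 0 < c)
    (hc' : 0 < c') :
    klDiv ((chiSquared k).map fun y => b + c*y) ((chiSquared k).map fun y => 0 + c'*y)
      = ∫ y, (((k:ℝ)/2 - 1) * (Real.log y - Real.log ((b + c*y)/c'))
          + (b + c*y)/(2*c') - y/2 + (Real.log c' - Real.log c)) ∂(chiSquared k) := by
  have hα : 2 < (k:ℝ)/2 := alpha_gt hk
  set α := (k:ℝ)/2 with hαdef
  set μ0 : Measure ℝ := volume.restrict (Ioi (0:ℝ)) with hμ0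
  set p : ℝ → ℝ≥0∞ := fun x => ENNReal.ofReal c⁻¹ * gammaPDF α (1/2) ((x - b)/c) with hpdef
  set q : ℝ → ℝ≥0∞ := fun x => ENNReal.ofReal c'⁻¹ * gammaPDF α (1/2) ((x - 0)/c') with hqdef
  have hmg : Measurable (gammaPDF α (1/2)) := (measurable_gammaPDFReal α (1/2)).ennreal_ofReal
  have hpm : Measurable p := (measurable_const.mul (hmg.comp (by fun_prop)))
  have hqm : Measurable q := (measurable_const.mul (hmg.comp (by fun_prop)))
  have hP : (chiSquared k).map (fun y => b + c*y) = μ0.withDensity p :=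
    map_gamma_affine (by linarith) hb hc
  have hQ : (chiSquared k).map (fun y => 0 + c'*y) = μ0.withDensity q :=
    map_gamma_affine (by linarith) le_rfl hc'
  have hp_top : ∀ᵐ x ∂μ0, p x ≠ ∞ := ae_of_all _ fun x =>
    ENNReal.mul_ne_top ENNReal.ofReal_ne_top ENNReal.ofReal_ne_top
  have hq_top : ∀ᵐ x ∂μ0, q x ≠ ∞ := ae_of_all _ fun x =>
    ENNReal.mul_ne_top ENNReal.ofReal_ne_top ENNReal.ofReal_ne_top
  have hq0 : ∀ᵐ x ∂μ0, q x ≠ 0 := by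
    filter_upwards [ae_restrict_mem measurableSet_Ioi] with x hx
    have hx' : (0:ℝ) < x := hx
    have harg : 0 < (x - 0)/c' := by rw [sub_zero]; positivity
    have h1 : ENNReal.ofReal c'⁻¹ ≠ 0 := by
      simp only [ne_eq, ENNReal.ofReal_eq_zero, not_le]
      positivity
    have h2 : gammaPDF α (1/2) ((x-0)/c') ≠ 0 := by
      simp only [gammaPDF, ne_eq, ENNReal.ofReal_eq_zero, not_le]
      exact gammaPDFReal_pos (by linarith) one_half_pos harg
    exact mul_ne_zero h1 h2
  have hrn := rnDeriv_withDensity_pair μ0 hpm hqm hp_top hq0 hq_top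
  have hPac : μ0.withDensity p ≪ μ0 := withDensity_absolutelyContinuous _ _
  have hrnP : (μ0.withDensity p).rnDeriv (μ0.withDensity q) =ᵐ[μ0.withDensity p]
      fun x => (q x)⁻¹ * p x := hPac.ae_eq hrn
  rw [klDiv, hP, hQ]
  have h5 : ∫ x, Real.log (((μ0.withDensity p).rnDeriv (μ0.withDensity q) x).toReal)
        ∂(μ0.withDensity p)
      = ∫ x, Real.log (((q x)⁻¹ * p x).toReal) ∂(μ0.withDensity p) := by
    refine integral_congr_ae ?_
    filter_upwards [hrnP] with x hx
    rw [hx]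
  rw [h5, ← hP]
  have hφ : AEMeasurable (fun y : ℝ => b + c*y) (chiSquared k) := by fun_prop
  have hFm : Measurable (fun x => Real.log (((q x)⁻¹ * p x).toReal)) :=
    Real.measurable_log.comp ((hqm.inv.mul hpm).ennreal_toReal)
  rw [integral_map hφ hFm.aestronglyMeasurable]
  refine integral_congr_ae ?_
  filter_upwards [chiSq_ae_pos hk] with y hy
  have hby : (0:ℝ) < b + c*y := by nlinarith
  have e1 : (b + c*y - b)/c = y := by field_simp; ring
  have e2 : (b + c*y - 0)/c' = (b + c*y)/c' := by ring_nf
  have hz : (0:ℝ) < (b + c*y)/c' := by positivity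
  set z := (b + c*y)/c' with hzdef
  have hu : (0:ℝ) < gammaPDFReal α (1/2) y := gammaPDFReal_pos (by linarith) one_half_pos hy
  have hv : (0:ℝ) < gammaPDFReal α (1/2) z := gammaPDFReal_pos (by linarith) one_half_pos hz
  have key : ((q (b + c*y))⁻¹ * p (b + c*y)).toReal
      = (c'⁻¹ * gammaPDFReal α (1/2) z)⁻¹ * (c⁻¹ * gammaPDFReal α (1/2) y) := by
    rw [hpdef, hqdef]
    simp only [e1, e2, ← hzdef, gammaPDF]
    rw [← ENNReal.ofReal_mul (by positivity), ← ENNReal.ofReal_mul (by positivity),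
      ← ENNReal.ofReal_inv_of_pos (by positivity), ← ENNReal.ofReal_mul (by positivity),
      ENNReal.toReal_ofReal (by positivity)]
  rw [key]
  have hlog : Real.log ((c'⁻¹ * gammaPDFReal α (1/2) z)⁻¹ * (c⁻¹ * gammaPDFReal α (1/2) y))
      = (Real.log (gammaPDFReal α (1/2) y) - Real.log c)
        - (Real.log (gammaPDFReal α (1/2) z) - Real.log c') := by
    rw [Real.log_mul (by positivity) (by positivity), Real.log_inv,
      Real.log_mul (by positivity) hv.ne', Real.log_mul (by positivity) hu.ne',
      Real.log_inv, Real.log_inv]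
    ring
  rw [hlog, log_gammaPDFReal (by linarith) hy, log_gammaPDFReal (by linarith) hz, hzdef]
  ring

lemma logdiff_pointwise_bound {b c y : ℝ} (hb : 0 ≤ b) (hc : 0 < c) (hy : 0 < y) :
    Real.log y - Real.log (b + c*y)
      ≤ -Real.log c - (b/c)*y⁻¹ + (b^2/(2*c^2))*(y⁻¹^2) := by
  set t := b/(c*y) with htdef
  have ht : 0 ≤ t := by positivity
  have hlb := aux_log_lb ht
  have hsplit : Real.log (b + c*y) = Real.log c + Real.log y + Real.log (1+t) := by
    have e : b + c*y = c * y * (1 + t) := by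
      rw [htdef]; field_simp; ring
    rw [e, Real.log_mul (by positivity) (by positivity), Real.log_mul hc.ne' hy.ne']
  have e2 : t = (b/c)*y⁻¹ := by rw [htdef]; field_simp
  have e3 : t^2/2 = (b^2/(2*c^2))*(y⁻¹^2) := by rw [e2]; ring
  rw [hsplit]
  linarith [hlb, e2, e3]

lemma integrable_logdiff {k : ℕ} (hk : 4 < k) {b c : ℝ} (hb : 0 ≤ b) (hc : 1 ≤ c) :
    Integrable (fun y => Real.log y - Real.log (b + c*y)) (chiSquared k) := by
  haveI := chiSq_prob hk
  have hinv := (chiSq_moment_inv hk).1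
  have hc0 : (0:ℝ) < c := by linarith
  refine Integrable.mono ((integrable_const (Real.log c)).add (hinv.const_mul b)) ?_ ?_
  · exact ((Real.measurable_log).sub (Real.measurable_log.comp (by fun_prop))).aestronglyMeasurable
  · filter_upwards [chiSq_ae_pos hk] with y hy
    have hby : (0:ℝ) < b + c*y := by nlinarith
    have hmono : Real.log y ≤ Real.log (b + c*y) :=
      Real.log_le_log hy (by nlinarith)
    have hA : 0 ≤ Real.log (b + c*y) - Real.log y := by linarith
    have hub : Real.log (b + c*y) - Real.log y ≤ Real.log c + b * y⁻¹ := by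
      have e : b + c*y = c * y * (1 + b/(c*y)) := by field_simp; ring
      have h1 : Real.log (b + c*y) = Real.log c + Real.log y + Real.log (1 + b/(c*y)) := by
        rw [e, Real.log_mul (by positivity) (by positivity), Real.log_mul hc0.ne' hy.ne']
      have h2 : Real.log (1 + b/(c*y)) ≤ b/(c*y) := by
        have := Real.log_le_sub_one_of_pos (show (0:ℝ) < 1 + b/(c*y) by positivity)
        linarith
      have h3 : b/(c*y) ≤ b * y⁻¹ := by
        rw [div_eq_mul_inv, mul_inv]
        have : b * (c⁻¹ * y⁻¹) ≤ b * (1 * y⁻¹) := by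
          apply mul_le_mul_of_nonneg_left _ hb
          apply mul_le_mul_of_nonneg_right _ (by positivity)
          rw [inv_le_one_iff₀]
          right; exact hc
        simpa using this
      linarith
    rw [Real.norm_eq_abs, Real.norm_eq_abs, abs_sub_comm, abs_of_nonneg hA]
    have hlogc : 0 ≤ Real.log c := Real.log_nonneg hc
    have hbinv : 0 ≤ b * y⁻¹ := by positivity
    calc Real.log (b + c*y) - Real.log y ≤ Real.log c + b * y⁻¹ := hub
      _ ≤ |Real.log c + b * y⁻¹| := le_abs_self _
    
lemma klDiv_affine_le (k : ℕ) (hk : 4 < k) {b c c' : ℝ} (hb : 0 ≤ b) (hc : 1 ≤ c)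
    (hc' : 0 < c') :
    klDiv ((chiSquared k).map fun y => b + c*y) ((chiSquared k).map fun y => 0 + c'*y)
      ≤ ((k:ℝ)/2 - 1) * (Real.log c' - Real.log c - (b/c)*(1/((k:ℝ)-2))
            + (b^2/(2*c^2))*(1/(((k:ℝ)-2)*((k:ℝ)-4))))
          + b/(2*c') + (c/(2*c') - 1/2)*(k:ℝ) + (Real.log c' - Real.log c) := by
  haveI := chiSq_prob hk
  have hα := alpha_gt hk
  have hc0 : (0:ℝ) < c := by linarith
  have hK2 : (0:ℝ) < (k:ℝ) - 2 := by linarith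
  have hK4 : (0:ℝ) < (k:ℝ) - 4 := by linarith
  have hS := integrable_logdiff hk hb hc
  have hY := (chiSq_moment_one hk).1
  have hYval := (chiSq_moment_one hk).2
  have hinv := (chiSq_moment_inv hk).1
  have hinvval := (chiSq_moment_inv hk).2
  have hinv2 := (chiSq_moment_inv_sq hk).1
  have hinv2val := (chiSq_moment_inv_sq hk).2
  rw [klDiv_affine_eq k hk hb hc0 hc']
  -- rewrite integrand a.e.
  have hcong : ∫ y, (((k:ℝ)/2 - 1) * (Real.log y - Real.log ((b + c*y)/c'))
          + (b + c*y)/(2*c') - y/2 + (Real.log c' - Real.log c)) ∂(chiSquared k)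
      = ∫ y, (((k:ℝ)/2 - 1) * (Real.log y - Real.log (b + c*y))
          + ((c/(2*c') - 1/2) * y
            + (((k:ℝ)/2 - 1) * Real.log c' + b/(2*c') + (Real.log c' - Real.log c)))) ∂(chiSquared k) := by
    refine integral_congr_ae ?_
    filter_upwards [chiSq_ae_pos hk] with y hy
    have hby : (0:ℝ) < b + c*y := by nlinarith
    rw [Real.log_div hby.ne' hc'.ne']
    ring
  rw [hcong]
  have hg1 : Integrable (fun y : ℝ => (c/(2*c') - 1/2) * y
      + (((k:ℝ)/2 - 1) * Real.log c' + b/(2*c') + (Real.log c' - Real.log c)))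
      (chiSquared k) := by
    exact (hY.const_mul _).add (integrable_const _)
  have hf1 : Integrable (fun y : ℝ => ((k:ℝ)/2 - 1) * (Real.log y - Real.log (b + c*y)))
      (chiSquared k) := by exact hS.const_mul _
  have hf2 : Integrable (fun y : ℝ => (c/(2*c') - 1/2) * y) (chiSquared k) := by
    exact hY.const_mul _
  rw [integral_add hf1 hg1, integral_add hf2 (integrable_const _),
    integral_const_mul, integral_const_mul, integral_const]
  simp only [measure_univ, ENNReal.toReal_one, probReal_univ, one_smul, hYval]
  -- bound the log-diff integral
  have hi1 : Integrable (fun y : ℝ => (-(b/c)) * y⁻¹) (chiSquared k) := by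
    exact hinv.const_mul _
  have hi2 : Integrable (fun y : ℝ => (b^2/(2*c^2)) * y⁻¹^2) (chiSquared k) := by
    exact hinv2.const_mul _
  have hi12 : Integrable (fun y : ℝ => (-(b/c)) * y⁻¹ + (b^2/(2*c^2)) * y⁻¹^2)
      (chiSquared k) := by exact hi1.add hi2
  have hRint : Integrable
      (fun y : ℝ => -Real.log c + ((-(b/c)) * y⁻¹ + (b^2/(2*c^2)) * y⁻¹^2)) (chiSquared k) := by
    exact (integrable_const _).add hi12
  have hmono : ∫ y, (Real.log y - Real.log (b + c*y)) ∂(chiSquared k)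
      ≤ -Real.log c - (b/c)*(1/((k:ℝ)-2)) + (b^2/(2*c^2))*(1/(((k:ℝ)-2)*((k:ℝ)-4))) := by
    have h1 : ∫ y, (Real.log y - Real.log (b + c*y)) ∂(chiSquared k)
        ≤ ∫ y, (-Real.log c + ((-(b/c)) * y⁻¹ + (b^2/(2*c^2)) * y⁻¹^2)) ∂(chiSquared k) := by
      refine integral_mono_ae hS hRint ?_
      filter_upwards [chiSq_ae_pos hk] with y hy
      have := logdiff_pointwise_bound hb hc0 hy
      linarith
    rw [integral_add (integrable_const _) hi12,
      integral_add hi1 hi2,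
      integral_const_mul, integral_const_mul, integral_const] at h1
    have huniv : (chiSquared k).real Set.univ = 1 := by
      simp [measure_univ]
    rw [hinvval, hinv2val, huniv, one_smul] at h1
    calc ∫ y, (Real.log y - Real.log (b + c*y)) ∂(chiSquared k)
        ≤ -Real.log c + (-(b/c) * (1/((k:ℝ)-2)) + b^2/(2*c^2) * (1/(((k:ℝ)-2)*((k:ℝ)-4)))) := h1
      _ = -Real.log c - (b/c)*(1/((k:ℝ)-2)) + (b^2/(2*c^2))*(1/(((k:ℝ)-2)*((k:ℝ)-4))) := by ring
  have hcoef : (0:ℝ) ≤ (k:ℝ)/2 - 1 := by linarith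
  have := mul_le_mul_of_nonneg_left hmono hcoef
  linarith

/-- For a ≥ 0, r ≥ 0, k > 4 and Y ~ χ²(k), both KL(a + Y ‖ (1+r)Y) and
KL(a + (1+r)Y ‖ Y) are at most a²/(2k-8) + kr²/4 + ar/2. -/
theorem stmt_5 (a r : ℝ) (ha : 0 ≤ a) (hr : 0 ≤ r) (k : ℕ) (hk : 4 < k) :
    max (klDiv ((chiSquared k).map fun y => a + y) ((chiSquared k).map fun y => (1 + r) * y))
        (klDiv ((chiSquared k).map fun y => a + (1 + r) * y) (chiSquared k))
      ≤ a ^ 2 / (2 * (k : ℝ) - 8) + (k : ℝ) * r ^ 2 / 4 + a * r / 2 := by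
  have hα := alpha_gt hk
  have hK2 : (0:ℝ) < (k:ℝ) - 2 := by linarith
  have hK4 : (0:ℝ) < (k:ℝ) - 4 := by linarith
  have h2K8 : (0:ℝ) < 2*(k:ℝ) - 8 := by linarith
  have hr1 : (0:ℝ) < 1 + r := by linarith
  have hL_ub : Real.log (1+r) ≤ r/(1+r) + r^2/2 := aux_log_ub hr
  have hL_lb : r - r^2/2 ≤ Real.log (1+r) := aux_log_lb hr
  set K := (k:ℝ) with hKdef
  set L := Real.log (1+r) with hLdef
  apply max_le
  · -- first KL
    have e1 : (fun y : ℝ => a + y) = fun y : ℝ => a + 1*y := by funext y; ring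
    have e2 : (fun y : ℝ => (1+r)*y) = fun y : ℝ => 0 + (1+r)*y := by funext y; ring
    rw [e1, e2]
    refine le_trans (klDiv_affine_le k hk ha le_rfl hr1) ?_
    rw [Real.log_one]
    have ex : (K/2 - 1) * (L - 0 - (a/1)*(1/(K-2)) + (a^2/(2*1^2))*(1/((K-2)*(K-4))))
        = (K/2-1)*L - (K/2-1)*((a/1)*(1/(K-2)))
          + (K/2-1)*((a^2/(2*1^2))*(1/((K-2)*(K-4)))) := by ring
    have i1 : (K/2-1)*((a/1)*(1/(K-2))) = a/2 := by
      field_simp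
    have i2 : (K/2-1)*((a^2/(2*1^2))*(1/((K-2)*(K-4)))) = a^2/(4*(K-4)) := by
      rw [eq_div_iff (by positivity)]
      field_simp
      ring
    have i3 : a^2/(4*(K-4)) ≤ a^2/(2*K-8) := by
      apply div_le_div_of_nonneg_left (by positivity) h2K8 (by linarith)
    have i5a : L - r/(1+r) ≤ r^2/2 := by linarith
    have i5b := mul_le_mul_of_nonneg_left i5a (show (0:ℝ) ≤ K/2 by linarith)
    have i5c : (K/2-1)*L + L + (1/(2*(1+r)) - 1/2)*K = (K/2)*(L - r/(1+r)) := by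
      field_simp
      ring
    have i6 : a/(2*(1+r)) ≤ a/2 := by
      apply div_le_div_of_nonneg_left ha (by norm_num) (by linarith)
    have har : 0 ≤ a*r/2 := by positivity
    linarith [ex, i1, i2, i3, i5b, i5c, i6]
  · -- second KL
    have e3 : chiSquared k = (chiSquared k).map (fun y : ℝ => 0 + 1*y) := by
      rw [show (fun y : ℝ => 0 + 1*y) = id from funext fun y => by simp]
      exact (Measure.map_id).symm
    nth_rewrite 2 [e3]
    refine le_trans (klDiv_affine_le k hk ha (by linarith) one_pos) ?_
    rw [Real.log_one]
    have ex : (K/2 - 1) * (0 - L - (a/(1+r))*(1/(K-2)) + (a^2/(2*(1+r)^2))*(1/((K-2)*(K-4))))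
        = -((K/2-1)*L) - (K/2-1)*((a/(1+r))*(1/(K-2)))
          + (K/2-1)*((a^2/(2*(1+r)^2))*(1/((K-2)*(K-4)))) := by ring
    have j1 : (K/2-1)*((a/(1+r))*(1/(K-2))) = a/(2*(1+r)) := by
      rw [eq_div_iff (by positivity)]
      field_simp
    have j2 : (K/2-1)*((a^2/(2*(1+r)^2))*(1/((K-2)*(K-4)))) = a^2/(4*(1+r)^2*(K-4)) := by
      rw [eq_div_iff (by positivity)]
      field_simp
      ring
    have j3 : a^2/(4*(1+r)^2*(K-4)) ≤ a^2/(2*K-8) := by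
      apply div_le_div_of_nonneg_left (by positivity) h2K8 (by nlinarith [sq_nonneg r])
    have j5a : r - L ≤ r^2/2 := by linarith
    have j5b := mul_le_mul_of_nonneg_left j5a (show (0:ℝ) ≤ K/2 by linarith)
    have j5c : -((K/2-1)*L) - L + ((1+r)/(2*1) - 1/2)*K = (K/2)*(r - L) := by ring
    have j6a : r/(1+r) ≤ r := by
      rw [div_le_iff₀ hr1]; nlinarith
    have j6b : a/(2*1) - a/(2*(1+r)) = (a/2)*(r/(1+r)) := by
      field_simp
      ring
    have j6c := mul_le_mul_of_nonneg_left j6a (show (0:ℝ) ≤ a/2 by positivity)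
    linarith [ex, j1, j2, j3, j5b, j5c, j6b, j6c]
end

section
/- Let Z ~ N(0, I_d) and let Σ be the diagonal matrix with k entries equal to 1+σ² and d-k entries equal to 1, where k ≥ 3 and σ ≥ 0. Then E[(ZᵀΣZ)²/(ZᵀΣ²Z)] ≤ 8(k+4) + 4(d-k+3)²/((1+σ²)²(k-2)). -/
open MeasureTheory ProbabilityTheory Real Set
open scoped ENNReal NNReal

lemma gauss_exp {b : ℝ} (hb : -(1/2) < b) :
    ∫⁻ x, ENNReal.ofReal (Real.exp (-(b * x^2))) ∂(gaussianReal 0 1)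
      = ENNReal.ofReal ((2*b+1) ^ (-(1:ℝ)/2)) := by
  have hb2 : (0:ℝ) < b + 1/2 := by linarith
  have h21 : (0:ℝ) < 2*b+1 := by linarith
  rw [gaussianReal_of_var_ne_zero 0 one_ne_zero,
    lintegral_withDensity_eq_lintegral_mul _ (measurable_gaussianPDF _ _)
      (by measurability)]
  have hpdf : ∀ x : ℝ, gaussianPDF 0 1 x * ENNReal.ofReal (Real.exp (-(b * x^2)))
      = ENNReal.ofReal ((Real.sqrt (2*π))⁻¹ * Real.exp (-(b+1/2) * x^2)) := by
    intro x
    rw [gaussianPDF, ← ENNReal.ofReal_mul (gaussianPDFReal_nonneg _ _ _)]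
    congr 1
    simp only [gaussianPDFReal, NNReal.coe_one, mul_one, sub_zero]
    rw [mul_assoc, ← Real.exp_add]
    congr 2
    ring
  simp only [hpdf, Pi.mul_apply]
  rw [← ofReal_integral_eq_lintegral_ofReal
      (((integrable_exp_neg_mul_sq hb2).const_mul _))
      (ae_of_all _ fun x => by positivity)]
  congr 1
  rw [integral_const_mul, integral_gaussian]
  have h1 : Real.sqrt (2*π) = Real.sqrt 2 * Real.sqrt π := Real.sqrt_mul (by norm_num) _
  have h2 : Real.sqrt (π/(b+1/2)) = Real.sqrt π / Real.sqrt (b+1/2) :=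
    Real.sqrt_div Real.pi_pos.le _
  have h3 : Real.sqrt (2*b+1) = Real.sqrt 2 * Real.sqrt (b+1/2) := by
    rw [show (2:ℝ)*b+1 = 2*(b+1/2) by ring]; exact Real.sqrt_mul (by norm_num) _
  have hπ : Real.sqrt π > 0 := Real.sqrt_pos.2 Real.pi_pos
  have hs2 : Real.sqrt 2 > 0 := by positivity
  have hsb : Real.sqrt (b+1/2) > 0 := Real.sqrt_pos.2 hb2
  rw [show -(1:ℝ)/2 = -(1/2) by ring, Real.rpow_neg h21.le, ← Real.sqrt_eq_rpow]
  rw [h1, h2, h3]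
  field_simp

lemma inv_rep {a : ℝ} (ha : 0 ≤ a) :
    ∫⁻ s in Ioi (0:ℝ), ENNReal.ofReal (Real.exp (-(s * a))) = (ENNReal.ofReal a)⁻¹ := by
  rcases eq_or_lt_of_le ha with h | h
  · simp only [← h, mul_zero, neg_zero, Real.exp_zero, ENNReal.ofReal_zero, ENNReal.inv_zero]
    simp [Real.volume_Ioi]
  · rw [← ofReal_integral_eq_lintegral_ofReal]
    · rw [show (fun s => Real.exp (-(s * a))) = fun s => Real.exp (-(s * a)) from rfl]
      have := integral_comp_mul_right_Ioi (fun x => Real.exp (-x)) 0 h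
      simp only [zero_mul] at this
      rw [show ∫ s in Ioi (0:ℝ), Real.exp (-(s * a)) = ∫ s in Ioi (0:ℝ), (fun x => Real.exp (-x)) (s * a) from rfl,
        this, integral_exp_neg_Ioi_zero, smul_eq_mul, mul_one, ENNReal.ofReal_inv_of_pos h]
    · have : IntegrableOn (fun x : ℝ => Real.exp (-a * x)) (Ioi 0) := exp_neg_integrableOn_Ioi 0 h
      refine this.congr_fun (fun x _ => by dsimp only; rw [neg_mul, mul_comm]) measurableSet_Ioi
    · exact ae_of_all _ fun x => (Real.exp_pos _).le

lemma rpow_int {k : ℕ} (hk3 : 3 ≤ k) :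
    ∫⁻ s in Ioi (0:ℝ), ENNReal.ofReal ((2*s+1) ^ (-(k:ℝ)/2))
      = ENNReal.ofReal (1/((k:ℝ)-2)) := by
  have hk2 : (1:ℝ) ≤ (k:ℝ) - 2 := by
    have : (3:ℝ) ≤ (k:ℝ) := by exact_mod_cast hk3
    linarith
  have hp : -(k:ℝ)/2 < -1 := by linarith
  set p : ℝ := -(k:ℝ)/2 with hpdef
  -- change of variables u = 2s+1
  have hmap : Measure.map (fun s : ℝ => 2*s+1) (volume.restrict (Ioi 0))
      = ENNReal.ofReal (1/2) • volume.restrict (Ioi 1) := by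
    have hf : Measurable (fun s : ℝ => 2*s+1) := by fun_prop
    have hpre : (fun s : ℝ => 2*s+1) ⁻¹' (Ioi 1) = Ioi 0 := by
      ext x; simp only [mem_preimage, mem_Ioi]; constructor <;> intro <;> linarith
    rw [← hpre, ← Measure.restrict_map hf measurableSet_Ioi]
    congr 1
    have h1 : (fun s : ℝ => 2*s+1) = (fun x : ℝ => x + 1) ∘ (fun s : ℝ => 2*s) := by
      funext s; simp
    rw [h1, ← Measure.map_map (by fun_prop) (by fun_prop)]
    rw [show (Measure.map (fun s : ℝ => 2*s) volume) = Measure.map ((2:ℝ) * ·) volume from rfl,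
      Real.map_volume_mul_left (by norm_num : (2:ℝ) ≠ 0)]
    simp only [Measure.map_smul]
    rw [map_add_right_eq_self volume 1]
    congr 2
    rw [abs_of_nonneg (by norm_num : (0:ℝ) ≤ (2:ℝ)⁻¹)]
    norm_num
  have hmeas : Measurable (fun u : ℝ => ENNReal.ofReal (u ^ p)) := by fun_prop
  calc ∫⁻ s in Ioi (0:ℝ), ENNReal.ofReal ((2*s+1) ^ p)
      = ∫⁻ u, ENNReal.ofReal (u ^ p) ∂(Measure.map (fun s : ℝ => 2*s+1) (volume.restrict (Ioi 0))) := by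
        rw [lintegral_map hmeas (by fun_prop)]
    _ = ENNReal.ofReal (1/2) * ∫⁻ u in Ioi (1:ℝ), ENNReal.ofReal (u ^ p) := by
        rw [hmap, lintegral_smul_measure, smul_eq_mul]
    _ = ENNReal.ofReal (1/2) * ENNReal.ofReal (∫ u in Ioi (1:ℝ), u ^ p) := by
        rw [ofReal_integral_eq_lintegral_ofReal (integrableOn_Ioi_rpow_of_lt hp one_pos)]
        exact (ae_restrict_iff' measurableSet_Ioi).2 (ae_of_all _ fun x hx =>
          Real.rpow_nonneg (by linarith [mem_Ioi.1 hx]) _)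
    _ = ENNReal.ofReal (1/((k:ℝ)-2)) := by
        rw [integral_Ioi_rpow_of_lt hp one_pos, Real.one_rpow,
          ← ENNReal.ofReal_mul (by norm_num)]
        congr 1
        have h2k : (2:ℝ) - (k:ℝ) ≠ 0 := by linarith
        rw [hpdef]
        field_simp [h2k]
        linear_combination inv_mul_cancel₀ h2k

lemma lintegral_pi_prod {μ : Measure ℝ} [IsProbabilityMeasure μ] :
    ∀ (n : ℕ) (g : Fin n → ℝ → ℝ≥0∞), (∀ i, Measurable (g i)) →
    ∫⁻ z : Fin n → ℝ, ∏ i, g i (z i) ∂(Measure.pi fun _ => μ) = ∏ i, ∫⁻ x, g i x ∂μ := by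
  intro n
  induction n with
  | zero =>
      intro g hg
      simp only [Finset.univ_eq_empty, Finset.prod_empty, lintegral_one]
      exact measure_univ
  | succ n ih =>
      intro g hg
      have hmp := measurePreserving_piFinSuccAbove (fun _ : Fin (n+1) => μ) 0
      set e := MeasurableEquiv.piFinSuccAbove (fun _ : Fin (n+1) => ℝ) 0
      have hG : Measurable (fun p : ℝ × (Fin n → ℝ) => g 0 p.1 * ∏ i, g i.succ (p.2 i)) := by
        refine ((hg 0).comp measurable_fst).mul ?_
        exact (Finset.measurable_prod Finset.univ fun i _ =>
          (hg i.succ).comp ((measurable_pi_apply i).comp measurable_snd))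
      have key : ∀ z : Fin (n+1) → ℝ,
          (∏ i, g i (z i)) = g 0 (e z).1 * ∏ i, g i.succ ((e z).2 i) := by
        intro z
        rw [Fin.prod_univ_succ]
        rfl
      calc ∫⁻ z : Fin (n+1) → ℝ, ∏ i, g i (z i) ∂(Measure.pi fun _ => μ)
          = ∫⁻ z, (fun p : ℝ × (Fin n → ℝ) => g 0 p.1 * ∏ i, g i.succ (p.2 i)) (e z)
              ∂(Measure.pi fun _ => μ) := by
            apply lintegral_congr
            intro z
            exact key z
        _ = ∫⁻ p : ℝ × (Fin n → ℝ), g 0 p.1 * ∏ i, g i.succ (p.2 i)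
              ∂(μ.prod (Measure.pi fun _ : Fin n => μ)) := hmp.lintegral_comp hG
        _ = (∫⁻ x, g 0 x ∂μ) * ∫⁻ y : Fin n → ℝ, ∏ i, g i.succ (y i)
              ∂(Measure.pi fun _ => μ) := by
            exact lintegral_prod_mul (f := g 0) (g := fun y : Fin n → ℝ => ∏ i, g i.succ (y i))
              ((hg 0).aemeasurable : AEMeasurable (g 0) μ)
              (((Finset.measurable_prod Finset.univ fun i _ =>
                (hg i.succ).comp (measurable_pi_apply i))).aemeasurable :
                AEMeasurable _ (Measure.pi fun _ : Fin n => μ))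
        _ = ∏ i, ∫⁻ x, g i x ∂μ := by
            rw [ih (fun i => g i.succ) (fun i => hg i.succ), Fin.prod_univ_succ]

lemma E2_le : ∫⁻ x, ENNReal.ofReal (x^2) ∂(gaussianReal 0 1) ≤ ENNReal.ofReal 1.24 := by
  have h8 : (8:ℝ≥0∞) ≠ ∞ := by simp
  rw [← ENNReal.add_le_add_iff_right h8]
  calc ∫⁻ x, ENNReal.ofReal (x^2) ∂(gaussianReal 0 1) + 8
      = ∫⁻ x, (ENNReal.ofReal (x^2) + 8) ∂(gaussianReal 0 1) := by
        rw [lintegral_add_right _ measurable_const, lintegral_const, measure_univ, mul_one]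
    _ ≤ ∫⁻ x, ENNReal.ofReal (8 * Real.exp (-(-(1/8) * x^2))) ∂(gaussianReal 0 1) := by
        refine lintegral_mono fun x => ?_
        rw [show (8:ℝ≥0∞) = ENNReal.ofReal 8 by simp, ← ENNReal.ofReal_add (sq_nonneg x) (by norm_num)]
        apply ENNReal.ofReal_le_ofReal
        have h := Real.add_one_le_exp (x^2/8)
        have : -(-(1/8) * x^2) = x^2/8 := by ring
        rw [this]
        nlinarith
    _ = 8 * ENNReal.ofReal ((2*(-(1/8))+1) ^ (-(1:ℝ)/2)) := by
        simp_rw [ENNReal.ofReal_mul (by norm_num : (0:ℝ) ≤ 8)]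
        rw [lintegral_const_mul _ (by fun_prop), gauss_exp (by norm_num)]
        simp
    _ ≤ ENNReal.ofReal 1.24 + 8 := by
        have h34 : (2*(-(1/8))+1 : ℝ) = 3/4 := by norm_num
        rw [h34]
        set a : ℝ := (3/4 : ℝ) ^ (-(1:ℝ)/2) with hadef
        have ha0 : 0 ≤ a := Real.rpow_nonneg (by norm_num) _
        have ha2 : a * a = 4/3 := by
          rw [hadef, ← Real.rpow_add (by norm_num : (0:ℝ) < 3/4)]
          norm_num
        have ha : a ≤ 1.1548 := by nlinarith
        rw [show (8:ℝ≥0∞) * ENNReal.ofReal a = ENNReal.ofReal (8*a) by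
            rw [ENNReal.ofReal_mul (by norm_num : (0:ℝ) ≤ 8)]; simp,
          show (8:ℝ≥0∞) = ENNReal.ofReal 8 by simp,
          ← ENNReal.ofReal_add (by norm_num) (by norm_num)]
        apply ENNReal.ofReal_le_ofReal
        nlinarith

lemma E4_le : ∫⁻ x, ENNReal.ofReal (x^4) ∂(gaussianReal 0 1) ≤ ENNReal.ofReal 17.14 := by
  set γ := gaussianReal 0 1
  set E2 := ∫⁻ x, ENNReal.ofReal (x^2) ∂γ with hE2def
  set E4 := ∫⁻ x, ENNReal.ofReal (x^4) ∂γ with hE4def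
  have hE2top : E2 ≠ ∞ := (E2_le.trans_lt ENNReal.ofReal_lt_top).ne
  have h1 : E4 + 16 * E2 + 64 ≤ 64 * ENNReal.ofReal ((1/2:ℝ) ^ (-(1:ℝ)/2)) := by
    have heq : ∫⁻ x, (ENNReal.ofReal (x^4) + 16 * ENNReal.ofReal (x^2) + 64) ∂γ
        = E4 + 16 * E2 + 64 := by
      rw [lintegral_add_right _ measurable_const, lintegral_add_right _ (by fun_prop),
        lintegral_const_mul _ (by fun_prop), lintegral_const, measure_univ, mul_one]
    rw [← heq]
    calc ∫⁻ x, (ENNReal.ofReal (x^4) + 16 * ENNReal.ofReal (x^2) + 64) ∂γ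
        ≤ ∫⁻ x, ENNReal.ofReal (64 * Real.exp (-(-(1/4) * x^2))) ∂γ := by
          refine lintegral_mono fun x => ?_
          rw [show (16:ℝ≥0∞) * ENNReal.ofReal (x^2) = ENNReal.ofReal (16 * x^2) by
              rw [ENNReal.ofReal_mul (by norm_num : (0:ℝ) ≤ 16)]; simp,
            show (64:ℝ≥0∞) = ENNReal.ofReal 64 by simp,
            ← ENNReal.ofReal_add (by positivity) (by positivity),
            ← ENNReal.ofReal_add (by positivity) (by norm_num)]
          apply ENNReal.ofReal_le_ofReal
          have h := Real.add_one_le_exp (x^2/8)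
          have hx : Real.exp (-(-(1/4) * x^2)) = Real.exp (x^2/8) * Real.exp (x^2/8) := by
            rw [← Real.exp_add]; ring_nf
          rw [hx]
          nlinarith [Real.exp_pos (x^2/8), sq_nonneg x]
      _ = 64 * ENNReal.ofReal ((1/2:ℝ) ^ (-(1:ℝ)/2)) := by
          simp_rw [ENNReal.ofReal_mul (by norm_num : (0:ℝ) ≤ 64)]
          rw [lintegral_const_mul _ (by fun_prop), gauss_exp (by norm_num)]
          norm_num
  have h2 : (32:ℝ≥0∞) ≤ 16 * E2 + 32 * ENNReal.ofReal ((2:ℝ) ^ (-(1:ℝ)/2)) := by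
    have heq : ∫⁻ x, (16 * ENNReal.ofReal (x^2) + 32 * ENNReal.ofReal (Real.exp (-((1/2) * x^2)))) ∂γ
        = 16 * E2 + 32 * ENNReal.ofReal ((2:ℝ) ^ (-(1:ℝ)/2)) := by
      rw [lintegral_add_right _ (by fun_prop), lintegral_const_mul _ (by fun_prop),
        lintegral_const_mul _ (by fun_prop), gauss_exp (by norm_num : -(1/2:ℝ) < 1/2)]
      norm_num
      rfl
    rw [← heq]
    calc (32:ℝ≥0∞) = ∫⁻ _, (32:ℝ≥0∞) ∂γ := by rw [lintegral_const, measure_univ, mul_one]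
      _ ≤ _ := by
          refine lintegral_mono fun x => ?_
          rw [show (16:ℝ≥0∞) * ENNReal.ofReal (x^2) = ENNReal.ofReal (16 * x^2) by
              rw [ENNReal.ofReal_mul (by norm_num : (0:ℝ) ≤ 16)]; simp,
            show (32:ℝ≥0∞) * ENNReal.ofReal (Real.exp (-((1/2) * x^2)))
              = ENNReal.ofReal (32 * Real.exp (-((1/2) * x^2))) by
              rw [ENNReal.ofReal_mul (by norm_num : (0:ℝ) ≤ 32)]; simp,
            ← ENNReal.ofReal_add (by positivity) (by positivity),
            show (32:ℝ≥0∞) = ENNReal.ofReal 32 by simp]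
          apply ENNReal.ofReal_le_ofReal
          have h := Real.add_one_le_exp (-((1/2) * x^2))
          nlinarith
  -- combine
  have hcomb : E4 + 16 * E2 + 96
      ≤ 64 * ENNReal.ofReal ((1/2:ℝ) ^ (-(1:ℝ)/2)) + (16 * E2 + 32 * ENNReal.ofReal ((2:ℝ) ^ (-(1:ℝ)/2))) := by
    calc E4 + 16 * E2 + 96 = (E4 + 16 * E2 + 64) + 32 := by ring
      _ ≤ _ := add_le_add h1 h2
  have hnum : 64 * ENNReal.ofReal ((1/2:ℝ) ^ (-(1:ℝ)/2)) + 32 * ENNReal.ofReal ((2:ℝ) ^ (-(1:ℝ)/2))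
      ≤ ENNReal.ofReal 113.14 := by
    set a : ℝ := (1/2:ℝ) ^ (-(1:ℝ)/2) with hadef
    set b : ℝ := (2:ℝ) ^ (-(1:ℝ)/2) with hbdef
    have ha0 : 0 ≤ a := Real.rpow_nonneg (by norm_num) _
    have hb0 : 0 ≤ b := Real.rpow_nonneg (by norm_num) _
    have ha2 : a * a = 2 := by
      rw [hadef, ← Real.rpow_add (by norm_num : (0:ℝ) < 1/2)]; norm_num
    have hb2 : b * b = 1/2 := by
      rw [hbdef, ← Real.rpow_add (by norm_num : (0:ℝ) < 2)]; norm_num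
    have ha : a ≤ 1.41422 := by nlinarith
    have hb : b ≤ 0.70711 := by nlinarith
    rw [show (64:ℝ≥0∞) * ENNReal.ofReal a = ENNReal.ofReal (64*a) by
        rw [ENNReal.ofReal_mul (by norm_num : (0:ℝ) ≤ 64)]; simp,
      show (32:ℝ≥0∞) * ENNReal.ofReal b = ENNReal.ofReal (32*b) by
        rw [ENNReal.ofReal_mul (by norm_num : (0:ℝ) ≤ 32)]; simp,
      ← ENNReal.ofReal_add (by positivity) (by positivity)]
    apply ENNReal.ofReal_le_ofReal
    nlinarith
  have hfin : E4 + 16 * E2 + 96 ≤ ENNReal.ofReal 113.14 + 16 * E2 := by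
    calc E4 + 16 * E2 + 96 ≤ 64 * ENNReal.ofReal ((1/2:ℝ) ^ (-(1:ℝ)/2))
          + (16 * E2 + 32 * ENNReal.ofReal ((2:ℝ) ^ (-(1:ℝ)/2))) := hcomb
      _ = (64 * ENNReal.ofReal ((1/2:ℝ) ^ (-(1:ℝ)/2))
          + 32 * ENNReal.ofReal ((2:ℝ) ^ (-(1:ℝ)/2))) + 16 * E2 := by ring
      _ ≤ ENNReal.ofReal 113.14 + 16 * E2 := add_le_add hnum le_rfl
  have h16top : 16 * E2 ≠ ∞ := by
    simp only [ne_eq, ENNReal.mul_eq_top]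
    push_neg
    constructor
    · intro; exact hE2top
    · intro h; exact absurd h (by simp)
  have h96 : (96:ℝ≥0∞) ≠ ∞ := by simp
  have : E4 + 96 ≤ ENNReal.ofReal 113.14 := by
    have := (ENNReal.add_le_add_iff_right h16top).1
      (by calc E4 + 96 + 16 * E2 = E4 + 16 * E2 + 96 := by ring
            _ ≤ ENNReal.ofReal 113.14 + 16 * E2 := hfin)
    exact this
  rw [show ENNReal.ofReal 113.14 = ENNReal.ofReal 17.14 + 96 by
      rw [show (96:ℝ≥0∞) = ENNReal.ofReal 96 by simp,
        ← ENNReal.ofReal_add (by norm_num) (by norm_num)]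
      norm_num] at this
  exact (ENNReal.add_le_add_iff_right h96).1 this

lemma card_lt_filter (d k : ℕ) (hkd : k ≤ d) :
    (Finset.univ.filter (fun i : Fin d => (i:ℕ) < k)).card = k := by
  have : Finset.univ.filter (fun i : Fin d => (i:ℕ) < k)
      = Finset.map (Fin.castLEEmb hkd) Finset.univ := by
    ext i
    simp only [Finset.mem_filter, Finset.mem_univ, true_and, Finset.mem_map]
    constructor
    · intro h; exact ⟨⟨(i:ℕ), h⟩, by simp [Fin.castLEEmb, Fin.castLE, Fin.ext_iff]⟩
    · rintro ⟨j, rfl⟩; simpa [Fin.castLEEmb, Fin.castLE] using j.2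
  rw [this, Finset.card_map, Finset.card_univ, Fintype.card_fin]

lemma card_not_lt_filter (d k : ℕ) (hkd : k ≤ d) :
    (Finset.univ.filter (fun i : Fin d => ¬ (i:ℕ) < k)).card = d - k := by
  have h := Finset.card_filter_add_card_filter_not
    (s := (Finset.univ : Finset (Fin d))) (p := fun i : Fin d => (i:ℕ) < k)
  rw [card_lt_filter d k hkd, Finset.card_univ, Fintype.card_fin] at h
  omega

-- single-coordinate marginal
lemma lintegral_eval {n : ℕ} {μ : Measure ℝ} [IsProbabilityMeasure μ]
    (i : Fin n) {g : ℝ → ℝ≥0∞} (hg : Measurable g) :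
    ∫⁻ z : Fin n → ℝ, g (z i) ∂(Measure.pi fun _ => μ) = ∫⁻ x, g x ∂μ := by
  have h1 : ∀ z : Fin n → ℝ, g (z i) = ∏ l, (if l = i then g (z l) else 1) := by
    intro z
    rw [Finset.prod_ite_eq' Finset.univ i (fun l => g (z l))]
    simp
  simp_rw [h1]
  rw [lintegral_pi_prod n (fun l x => if l = i then g x else 1)
    (fun l => by split_ifs <;> fun_prop)]
  calc ∏ l, ∫⁻ x, (if l = i then g x else 1 : ℝ≥0∞) ∂μ
      = ∏ l, (if l = i then ∫⁻ x, g x ∂μ else 1) := by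
        apply Finset.prod_congr rfl
        intro l _
        split_ifs <;> simp
    _ = ∫⁻ x, g x ∂μ := by rw [Finset.prod_ite_eq' Finset.univ i]; simp


lemma inner_bound (d k : ℕ) (hk3 : 3 ≤ k) (hkd : k ≤ d) (s : ℝ) (hs : 0 < s) :
    ∫⁻ z : Fin d → ℝ, (ENNReal.ofReal (∑ i : Fin d, if (i:ℕ) < k then 0 else z i^2))^2
        * ENNReal.ofReal (Real.exp (-(s * ∑ i : Fin d, if (i:ℕ) < k then z i^2 else 0)))
        ∂(Measure.pi fun _ : Fin d => gaussianReal 0 1)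
      ≤ ENNReal.ofReal (2*((d:ℝ)-(k:ℝ)+3)^2) * ENNReal.ofReal ((2*s+1) ^ (-(k:ℝ)/2)) := by
  classical
  set γ := gaussianReal 0 1 with hγdef
  set μ := Measure.pi fun _ : Fin d => γ with hμdef
  set S : Finset (Fin d) := Finset.univ.filter (fun i => ¬ (i:ℕ) < k) with hSdef
  set m : ℕ := d - k with hmdef
  have hScard : S.card = m := card_not_lt_filter d k hkd
  have hmcast : (m:ℝ) = (d:ℝ) - (k:ℝ) := by
    rw [hmdef, Nat.cast_sub hkd]
  set bodyf : Fin d × Fin d → Fin d → ℝ → ℝ≥0∞ := fun p l x =>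
      ((if (l:ℕ) < k then ENNReal.ofReal (Real.exp (-(s * x^2))) else 1)
        * (if l = p.1 then ENNReal.ofReal (x^2) else 1)
        * (if l = p.2 then ENNReal.ofReal (x^2) else 1)) with hbodyf
  have hmeas : ∀ (p : Fin d × Fin d) (l : Fin d), Measurable (bodyf p l) := by
    intro p l
    apply Measurable.mul
    apply Measurable.mul
    · split_ifs <;> fun_prop
    · split_ifs <;> fun_prop
    · split_ifs <;> fun_prop
  have hB : ∀ z : Fin d → ℝ, (∑ i : Fin d, if (i:ℕ) < k then 0 else z i^2)
      = ∑ i ∈ S, z i^2 := by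
    intro z
    rw [hSdef, Finset.sum_filter]
    apply Finset.sum_congr rfl
    intro i _
    by_cases h : (i:ℕ) < k <;> simp [h]
  have key : ∀ z : Fin d → ℝ,
      (ENNReal.ofReal (∑ i : Fin d, if (i:ℕ) < k then 0 else z i^2))^2
        * ENNReal.ofReal (Real.exp (-(s * ∑ i : Fin d, if (i:ℕ) < k then z i^2 else 0)))
      = ∑ p ∈ S ×ˢ S, ∏ l : Fin d, bodyf p l (z l) := by
    intro z
    have e1 : (ENNReal.ofReal (∑ i : Fin d, if (i:ℕ) < k then 0 else z i^2))^2
        = ∑ p ∈ S ×ˢ S, ENNReal.ofReal ((z p.1)^2) * ENNReal.ofReal ((z p.2)^2) := by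
      rw [hB z, ENNReal.ofReal_sum_of_nonneg (fun i _ => sq_nonneg _), sq,
        Finset.sum_mul_sum, Finset.sum_product]
    have e2 : ENNReal.ofReal (Real.exp (-(s * ∑ i : Fin d, if (i:ℕ) < k then z i^2 else 0)))
        = ∏ l : Fin d, (if (l:ℕ) < k then ENNReal.ofReal (Real.exp (-(s * (z l)^2))) else 1) := by
      have harg : -(s * ∑ i : Fin d, if (i:ℕ) < k then z i^2 else 0)
          = ∑ l : Fin d, (if (l:ℕ) < k then -(s * (z l)^2) else 0) := by
        rw [Finset.mul_sum, ← Finset.sum_neg_distrib]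
        apply Finset.sum_congr rfl
        intro i _
        by_cases h : (i:ℕ) < k <;> simp [h]
      rw [harg, Real.exp_sum, ENNReal.ofReal_prod_of_nonneg (fun i _ => (Real.exp_pos _).le)]
      apply Finset.prod_congr rfl
      intro l _
      by_cases h : (l:ℕ) < k <;> simp [h]
    rw [e1, e2, Finset.sum_mul]
    apply Finset.sum_congr rfl
    intro p hp
    have pi1 : ∏ l : Fin d, (if l = p.1 then ENNReal.ofReal ((z l)^2) else 1)
        = ENNReal.ofReal ((z p.1)^2) := by
      rw [Finset.prod_ite_eq' Finset.univ p.1 (fun l => ENNReal.ofReal ((z l)^2))]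
      simp
    have pi2 : ∏ l : Fin d, (if l = p.2 then ENNReal.ofReal ((z l)^2) else 1)
        = ENNReal.ofReal ((z p.2)^2) := by
      rw [Finset.prod_ite_eq' Finset.univ p.2 (fun l => ENNReal.ofReal ((z l)^2))]
      simp
    rw [hbodyf]
    dsimp only
    rw [Finset.prod_mul_distrib, Finset.prod_mul_distrib, pi1, pi2]
    ring
  simp_rw [key]
  have hFmeas : ∀ p ∈ S ×ˢ S, Measurable (fun z : Fin d → ℝ => ∏ l : Fin d, bodyf p l (z l)) :=
    fun p _ => Finset.measurable_prod _ (fun l _ => (hmeas p l).comp (measurable_pi_apply l))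
  rw [lintegral_finset_sum _ hFmeas]
  have hterm : ∀ p ∈ S ×ˢ S, ∫⁻ z : Fin d → ℝ, (∏ l : Fin d, bodyf p l (z l)) ∂μ
      ≤ ENNReal.ofReal ((2*s+1) ^ (-(k:ℝ)/2)) *
        ((ENNReal.ofReal 1.24)^2 + if p.1 = p.2 then ENNReal.ofReal 17.14 else 0) := by
    rintro ⟨i, j⟩ hp
    rw [Finset.mem_product] at hp
    obtain ⟨hi, hj⟩ := hp
    have hiS : ¬ (i:ℕ) < k := by rw [hSdef] at hi; simpa using hi
    have hjS : ¬ (j:ℕ) < k := by rw [hSdef] at hj; simpa using hj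
    rw [hμdef, lintegral_pi_prod d _ (hmeas ⟨i,j⟩)]
    rw [← Finset.prod_filter_mul_prod_filter_not Finset.univ (fun l : Fin d => (l:ℕ) < k)]
    have hfst : ∏ l ∈ Finset.univ.filter (fun l : Fin d => (l:ℕ) < k),
        (∫⁻ x, bodyf ⟨i,j⟩ l x ∂γ) = ENNReal.ofReal ((2*s+1) ^ (-(k:ℝ)/2)) := by
      have heach : ∀ l ∈ Finset.univ.filter (fun l : Fin d => (l:ℕ) < k),
          (∫⁻ x, bodyf ⟨i,j⟩ l x ∂γ) = ENNReal.ofReal ((2*s+1) ^ (-(1:ℝ)/2)) := by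
        intro l hl
        have hlk : (l:ℕ) < k := by simpa using hl
        have hli : l ≠ i := fun h => hiS (h ▸ hlk)
        have hlj : l ≠ j := fun h => hjS (h ▸ hlk)
        rw [hbodyf]
        simp only [hlk, if_true, hli, if_false, hlj, mul_one]
        rw [hγdef, ← gauss_exp (by linarith : -(1/2:ℝ) < s)]
      rw [Finset.prod_congr rfl heach, Finset.prod_const, card_lt_filter d k hkd,
        ← ENNReal.ofReal_pow (Real.rpow_nonneg (by linarith) _),
        ← Real.rpow_natCast ((2*s+1) ^ (-(1:ℝ)/2)) k,
        ← Real.rpow_mul (by linarith : (0:ℝ) ≤ 2*s+1)]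
      congr 1
      ring_nf
    rw [hfst]
    apply mul_le_mul_right
    by_cases hij : i = j
    · subst hij
      simp only [if_pos rfl]
      have hbound : ∀ l ∈ Finset.univ.filter (fun l : Fin d => ¬ (l:ℕ) < k),
          (∫⁻ x, bodyf ⟨i,i⟩ l x ∂γ) ≤ (if l = i then ENNReal.ofReal 17.14 else 1) := by
        intro l hl
        have hlk : ¬ (l:ℕ) < k := by simpa using hl
        rw [hbodyf]
        simp only [hlk, if_false, one_mul]
        by_cases h : l = i
        · simp only [h, if_true]
          calc ∫⁻ x, ENNReal.ofReal (x^2) * ENNReal.ofReal (x^2) ∂γ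
              = ∫⁻ x, ENNReal.ofReal (x^4) ∂γ := by
                apply lintegral_congr
                intro x
                rw [← ENNReal.ofReal_mul (sq_nonneg _)]
                congr 1
                ring
            _ ≤ ENNReal.ofReal 17.14 := E4_le
        · simp only [h, if_false, mul_one]
          rw [lintegral_one, measure_univ]
      calc ∏ l ∈ Finset.univ.filter (fun l : Fin d => ¬ (l:ℕ) < k), (∫⁻ x, bodyf ⟨i,i⟩ l x ∂γ)
          ≤ ∏ l ∈ Finset.univ.filter (fun l : Fin d => ¬ (l:ℕ) < k),
            (if l = i then ENNReal.ofReal 17.14 else 1) := Finset.prod_le_prod' hbound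
        _ = ENNReal.ofReal 17.14 := by
            rw [Finset.prod_ite_eq' _ i (fun _ => ENNReal.ofReal 17.14), if_pos]
            rw [hSdef] at hi; exact hi
        _ ≤ (ENNReal.ofReal 1.24)^2 + ENNReal.ofReal 17.14 := le_add_self
    · simp only [hij, if_false, add_zero]
      have hbound : ∀ l ∈ Finset.univ.filter (fun l : Fin d => ¬ (l:ℕ) < k),
          (∫⁻ x, bodyf ⟨i,j⟩ l x ∂γ)
          ≤ ((if l = i then ENNReal.ofReal 1.24 else 1)
              * (if l = j then ENNReal.ofReal 1.24 else 1)) := by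
        intro l hl
        have hlk : ¬ (l:ℕ) < k := by simpa using hl
        rw [hbodyf]
        simp only [hlk, if_false, one_mul]
        by_cases h1 : l = i
        · have h2 : ¬ l = j := fun h => hij (h1.symm.trans h)
          simp only [if_pos h1, if_neg h2, mul_one]
          exact E2_le
        · simp only [if_neg h1, one_mul]
          by_cases h2 : l = j
          · simp only [if_pos h2]
            exact E2_le
          · simp only [if_neg h2]
            rw [lintegral_one, measure_univ]
      calc ∏ l ∈ Finset.univ.filter (fun l : Fin d => ¬ (l:ℕ) < k), (∫⁻ x, bodyf ⟨i,j⟩ l x ∂γ)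
          ≤ ∏ l ∈ Finset.univ.filter (fun l : Fin d => ¬ (l:ℕ) < k),
            ((if l = i then ENNReal.ofReal 1.24 else 1)
              * (if l = j then ENNReal.ofReal 1.24 else 1)) := Finset.prod_le_prod' hbound
        _ = (ENNReal.ofReal 1.24)^2 := by
            rw [Finset.prod_mul_distrib,
              Finset.prod_ite_eq' _ i (fun _ => ENNReal.ofReal 1.24),
              Finset.prod_ite_eq' _ j (fun _ => ENNReal.ofReal 1.24)]
            rw [hSdef] at hi hj
            rw [if_pos hi, if_pos hj, sq]
  calc ∑ p ∈ S ×ˢ S, ∫⁻ z : Fin d → ℝ, (∏ l : Fin d, bodyf p l (z l)) ∂μ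
      ≤ ∑ p ∈ S ×ˢ S, ENNReal.ofReal ((2*s+1) ^ (-(k:ℝ)/2)) *
          ((ENNReal.ofReal 1.24)^2 + if p.1 = p.2 then ENNReal.ofReal 17.14 else 0) :=
        Finset.sum_le_sum hterm
    _ = ENNReal.ofReal ((2*s+1) ^ (-(k:ℝ)/2)) *
          ∑ p ∈ S ×ˢ S, ((ENNReal.ofReal 1.24)^2 + if p.1 = p.2 then ENNReal.ofReal 17.14 else 0) := by
        rw [Finset.mul_sum]
    _ ≤ ENNReal.ofReal (2*((d:ℝ)-(k:ℝ)+3)^2) * ENNReal.ofReal ((2*s+1) ^ (-(k:ℝ)/2)) := by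
        rw [mul_comm]
        apply mul_le_mul_left
        have hsum : ∑ p ∈ S ×ˢ S, ((ENNReal.ofReal 1.24)^2 + if p.1 = p.2 then ENNReal.ofReal 17.14 else 0)
            = (m^2) • (ENNReal.ofReal 1.24)^2 + m • ENNReal.ofReal 17.14 := by
          rw [Finset.sum_add_distrib, Finset.sum_const, Finset.card_product, hScard]
          congr 1
          · rw [pow_two m]
          · rw [Finset.sum_product]
            have : ∀ i ∈ S, (∑ j ∈ S, if i = j then ENNReal.ofReal 17.14 else 0)
                = ENNReal.ofReal 17.14 := by
              intro i hi
              rw [Finset.sum_ite_eq S i (fun _ => ENNReal.ofReal 17.14), if_pos hi]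
            rw [Finset.sum_congr rfl this, Finset.sum_const, hScard]
        rw [hsum]
        have e1 : (m^2) • (ENNReal.ofReal 1.24)^2 + m • ENNReal.ofReal 17.14
            = ENNReal.ofReal ((m:ℝ)^2 * 1.24^2 + (m:ℝ) * 17.14) := by
          rw [nsmul_eq_mul, nsmul_eq_mul, ← ENNReal.ofReal_pow (by norm_num),
            ← ENNReal.ofReal_natCast (m^2), ← ENNReal.ofReal_natCast m,
            ← ENNReal.ofReal_mul (by positivity), ← ENNReal.ofReal_mul (by positivity),
            ← ENNReal.ofReal_add (by positivity) (by positivity)]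
          norm_num
        rw [e1]
        apply ENNReal.ofReal_le_ofReal
        rw [← hmcast]
        have hm0 : (0:ℝ) ≤ (m:ℝ) := Nat.cast_nonneg m
        nlinarith [sq_nonneg ((m:ℝ) - 5.56)]

set_option maxHeartbeats 2000000 in
/-- Let Z ~ N(0, I_d) and Σ diagonal with k entries 1+σ² and d-k entries 1 (k ≥ 3, σ ≥ 0).
Then E[(ZᵀΣZ)²/(ZᵀΣ²Z)] ≤ 8(k+4) + 4(d-k+3)²/((1+σ²)²(k-2)). -/
theorem stmt_17 (d k : ℕ) (hk3 : 3 ≤ k) (hkd : k ≤ d) (σ : ℝ) (hσ : 0 ≤ σ) :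
    ∫ z : Fin d → ℝ,
        (∑ i : Fin d, (if (i : ℕ) < k then 1 + σ ^ 2 else 1) * z i ^ 2) ^ 2
          / (∑ i : Fin d, (if (i : ℕ) < k then 1 + σ ^ 2 else 1) ^ 2 * z i ^ 2)
        ∂(Measure.pi fun _ : Fin d => gaussianReal 0 1)
      ≤ 8 * ((k : ℝ) + 4) + 4 * ((d : ℝ) - k + 3) ^ 2 / ((1 + σ ^ 2) ^ 2 * ((k : ℝ) - 2)) := by
  classical
  have hkR : (3:ℝ) ≤ (k:ℝ) := by exact_mod_cast hk3
  have hk2R : (1:ℝ) ≤ (k:ℝ) - 2 := by linarith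
  set γ := gaussianReal 0 1 with hγdef
  set μ := Measure.pi fun _ : Fin d => γ with hμdef
  set c : ℝ := 1 + σ^2 with hcdef
  have hc1 : (1:ℝ) ≤ c := by rw [hcdef]; nlinarith
  have hc0 : (0:ℝ) < c := by linarith
  set A : (Fin d → ℝ) → ℝ := fun z => ∑ i : Fin d, if (i:ℕ) < k then z i^2 else 0 with hAdef
  set B : (Fin d → ℝ) → ℝ := fun z => ∑ i : Fin d, if (i:ℕ) < k then 0 else z i^2 with hBdef
  have hA0 : ∀ z, 0 ≤ A z := fun z => Finset.sum_nonneg fun i _ => by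
    by_cases h : (i:ℕ) < k <;> simp [h] <;> positivity
  have hB0 : ∀ z, 0 ≤ B z := fun z => Finset.sum_nonneg fun i _ => by
    by_cases h : (i:ℕ) < k <;> simp [h] <;> positivity
  have hAmeas : Measurable A := by
    rw [hAdef]
    apply Finset.measurable_sum
    intro i _
    by_cases h : (i:ℕ) < k <;> simp [h] <;> fun_prop
  have hBmeas : Measurable B := by
    rw [hBdef]
    apply Finset.measurable_sum
    intro i _
    by_cases h : (i:ℕ) < k <;> simp [h] <;> fun_prop
  have hN : ∀ z : Fin d → ℝ, (∑ i : Fin d, (if (i:ℕ) < k then c else 1) * z i^2)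
      = c * A z + B z := by
    intro z
    rw [hAdef, hBdef]
    dsimp only
    rw [Finset.mul_sum, ← Finset.sum_add_distrib]
    apply Finset.sum_congr rfl
    intro i _
    by_cases h : (i:ℕ) < k <;> simp [h]
  have hD : ∀ z : Fin d → ℝ, (∑ i : Fin d, (if (i:ℕ) < k then c else 1)^2 * z i^2)
      = c^2 * A z + B z := by
    intro z
    rw [hAdef, hBdef]
    dsimp only
    rw [Finset.mul_sum, ← Finset.sum_add_distrib]
    apply Finset.sum_congr rfl
    intro i _
    by_cases h : (i:ℕ) < k <;> simp [h]
  simp only [hN, hD]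
  have hfmeas : Measurable fun z => (c*A z+B z)^2/(c^2*A z + B z) := by
    apply Measurable.div
    · exact ((hAmeas.const_mul c).add hBmeas).pow_const 2
    · exact (hAmeas.const_mul (c^2)).add hBmeas
  rw [integral_eq_lintegral_of_nonneg_ae (ae_of_all _ fun z => by positivity)
    hfmeas.aestronglyMeasurable]
  have hRHSnn : (0:ℝ) ≤ 8*((k:ℝ)+4) + 4*((d:ℝ)-(k:ℝ)+3)^2/(c^2*((k:ℝ)-2)) := by
    have h1 : (0:ℝ) ≤ 4*((d:ℝ)-(k:ℝ)+3)^2/(c^2*((k:ℝ)-2)) :=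
      div_nonneg (by positivity) (mul_nonneg (by positivity) (by linarith))
    have h2 : (0:ℝ) ≤ 8*((k:ℝ)+4) := by positivity
    linarith
  apply ENNReal.toReal_le_of_le_ofReal hRHSnn
  -- pointwise bound
  have hpt : ∀ z : Fin d → ℝ, ENNReal.ofReal ((c*A z+B z)^2/(c^2*A z + B z))
      ≤ 2 * ENNReal.ofReal (A z)
        + 2 * (ENNReal.ofReal (B z))^2 / (ENNReal.ofReal (c^2) * ENNReal.ofReal (A z)) := by
    intro z
    rcases eq_or_lt_of_le (hA0 z) with hA | hA
    · rcases eq_or_lt_of_le (hB0 z) with hB | hB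
      · rw [← hA, ← hB]
        norm_num
    
      · rw [← hA]
        simp only [ENNReal.ofReal_zero, mul_zero]
        have hne : (2:ℝ≥0∞) * (ENNReal.ofReal (B z))^2 ≠ 0 :=
          mul_ne_zero two_ne_zero (pow_ne_zero _ (ENNReal.ofReal_pos.2 hB).ne')
        rw [ENNReal.div_zero hne]
        exact le_top
    · have hBz := hB0 z
      have hDpos : (0:ℝ) < c^2*A z := by positivity
      have hD2 : (0:ℝ) < c^2*A z + B z := by linarith
      have hreal : (c*A z+B z)^2/(c^2*A z + B z) ≤ 2*A z + 2*((B z)^2/(c^2*A z)) := by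
        have hnum : (c*A z+B z)^2 ≤ 2*(c*A z)^2 + 2*(B z)^2 := by
          nlinarith [sq_nonneg (c*A z - B z)]
        calc (c*A z+B z)^2/(c^2*A z + B z)
            ≤ (2*(c*A z)^2 + 2*(B z)^2)/(c^2*A z + B z) := by gcongr
          _ = 2*(c*A z)^2/(c^2*A z + B z) + 2*(B z)^2/(c^2*A z + B z) := by rw [add_div]
          _ ≤ 2*(c*A z)^2/(c^2*A z) + 2*(B z)^2/(c^2*A z) := by
              gcongr <;> linarith
          _ = 2*A z + 2*((B z)^2/(c^2*A z)) := by
              field_simp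
      calc ENNReal.ofReal ((c*A z+B z)^2/(c^2*A z + B z))
          ≤ ENNReal.ofReal (2*A z + 2*((B z)^2/(c^2*A z))) := ENNReal.ofReal_le_ofReal hreal
        _ = 2 * ENNReal.ofReal (A z)
            + 2 * (ENNReal.ofReal (B z))^2 / (ENNReal.ofReal (c^2) * ENNReal.ofReal (A z)) := by
            rw [ENNReal.ofReal_add (by positivity) (by positivity),
              ENNReal.ofReal_mul (by norm_num : (0:ℝ) ≤ 2),
              ENNReal.ofReal_mul (by norm_num : (0:ℝ) ≤ 2),
              ENNReal.ofReal_div_of_pos hDpos,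
              ENNReal.ofReal_mul (sq_nonneg c),
              ENNReal.ofReal_pow (hB0 z)]
            norm_num [mul_div_assoc]
  have hG2meas : Measurable fun z => (ENNReal.ofReal (B z))^2 * (ENNReal.ofReal (A z))⁻¹ :=
    ((hBmeas.ennreal_ofReal).pow_const 2).mul (hAmeas.ennreal_ofReal.inv)
  have hc2ne0 : ENNReal.ofReal (c^2) ≠ 0 := (ENNReal.ofReal_pos.2 (by positivity)).ne'
  have hc2top : ENNReal.ofReal (c^2) ≠ ⊤ := ENNReal.ofReal_ne_top
  calc ∫⁻ z, ENNReal.ofReal ((c*A z+B z)^2/(c^2*A z + B z)) ∂μ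
      ≤ ∫⁻ z, (2 * ENNReal.ofReal (A z)
          + 2 * (ENNReal.ofReal (B z))^2 / (ENNReal.ofReal (c^2) * ENNReal.ofReal (A z))) ∂μ :=
        lintegral_mono hpt
    _ = ∫⁻ z, 2 * ENNReal.ofReal (A z) ∂μ
        + ∫⁻ z, 2 * (ENNReal.ofReal (B z))^2 / (ENNReal.ofReal (c^2) * ENNReal.ofReal (A z)) ∂μ := by
        apply lintegral_add_left
        exact (hAmeas.ennreal_ofReal).const_mul 2
    _ ≤ ENNReal.ofReal (8*((k:ℝ)+4))
        + ENNReal.ofReal (4*((d:ℝ)-(k:ℝ)+3)^2/(c^2*((k:ℝ)-2))) := by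
        apply add_le_add
        · -- first term
          rw [lintegral_const_mul _ hAmeas.ennreal_ofReal]
          have hAsum : ∀ z : Fin d → ℝ, ENNReal.ofReal (A z)
              = ∑ i : Fin d, if (i:ℕ) < k then ENNReal.ofReal ((z i)^2) else 0 := by
            intro z
            rw [hAdef]
            dsimp only
            rw [ENNReal.ofReal_sum_of_nonneg (fun i _ => by
              by_cases h : (i:ℕ) < k <;> simp [h] <;> positivity)]
            apply Finset.sum_congr rfl
            intro i _
            by_cases h : (i:ℕ) < k <;> simp [h]
          simp_rw [hAsum]
          rw [lintegral_finset_sum _ (fun i _ => by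
            by_cases h : (i:ℕ) < k <;> simp [h] <;> fun_prop)]
          have heach : ∀ i ∈ (Finset.univ : Finset (Fin d)),
              (∫⁻ z : Fin d → ℝ, (if (i:ℕ) < k then ENNReal.ofReal ((z i)^2) else 0) ∂μ)
              ≤ (if (i:ℕ) < k then ENNReal.ofReal 1.24 else 0) := by
            intro i _
            by_cases h : (i:ℕ) < k
            · simp only [h, if_true]
              rw [hμdef, hγdef, lintegral_eval i (by fun_prop : Measurable fun x : ℝ => ENNReal.ofReal (x^2))]
              exact E2_le
            · simp only [h, if_false, lintegral_zero, le_refl]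
          calc 2 * ∑ i : Fin d, ∫⁻ z : Fin d → ℝ, (if (i:ℕ) < k then ENNReal.ofReal ((z i)^2) else 0) ∂μ
              ≤ 2 * ∑ i : Fin d, (if (i:ℕ) < k then ENNReal.ofReal 1.24 else 0) :=
                mul_le_mul_right (Finset.sum_le_sum heach) 2
            _ = 2 * (k • ENNReal.ofReal 1.24) := by
                rw [← Finset.sum_filter, Finset.sum_const, card_lt_filter d k hkd]
            _ ≤ ENNReal.ofReal (8*((k:ℝ)+4)) := by
                rw [nsmul_eq_mul, ← ENNReal.ofReal_natCast k,
                  ← ENNReal.ofReal_mul (Nat.cast_nonneg k),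
                  show (2:ℝ≥0∞) = ENNReal.ofReal 2 by simp,
                  ← ENNReal.ofReal_mul (by norm_num)]
                apply ENNReal.ofReal_le_ofReal
                have : (0:ℝ) ≤ (k:ℝ) := Nat.cast_nonneg k
                nlinarith
        · -- second term
          have hsplit : ∀ z : Fin d → ℝ,
              2 * (ENNReal.ofReal (B z))^2 / (ENNReal.ofReal (c^2) * ENNReal.ofReal (A z))
              = (2 * (ENNReal.ofReal (c^2))⁻¹)
                * ((ENNReal.ofReal (B z))^2 * (ENNReal.ofReal (A z))⁻¹) := by
            intro z
            rw [div_eq_mul_inv, ENNReal.mul_inv (Or.inl hc2ne0) (Or.inl hc2top)]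
            ring
          simp_rw [hsplit]
          rw [lintegral_const_mul _ hG2meas]
          have hcore : ∫⁻ z, (ENNReal.ofReal (B z))^2 * (ENNReal.ofReal (A z))⁻¹ ∂μ
              ≤ ENNReal.ofReal (2*((d:ℝ)-(k:ℝ)+3)^2) * ENNReal.ofReal (1/((k:ℝ)-2)) := by
            have hswap : ∫⁻ z, (ENNReal.ofReal (B z))^2 * (ENNReal.ofReal (A z))⁻¹ ∂μ
                = ∫⁻ s in Ioi (0:ℝ), ∫⁻ z, (ENNReal.ofReal (B z))^2
                    * ENNReal.ofReal (Real.exp (-(s * A z))) ∂μ := by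
              have h1 : ∀ z : Fin d → ℝ, (ENNReal.ofReal (B z))^2 * (ENNReal.ofReal (A z))⁻¹
                  = ∫⁻ s in Ioi (0:ℝ), (ENNReal.ofReal (B z))^2
                      * ENNReal.ofReal (Real.exp (-(s * A z))) := by
                intro z
                rw [lintegral_const_mul _ (by fun_prop), inv_rep (hA0 z)]
              simp_rw [h1]
              rw [lintegral_lintegral_swap]
              exact (((hBmeas.comp measurable_fst).ennreal_ofReal.pow_const 2).mul
                ((ENNReal.measurable_ofReal).comp (Real.measurable_exp.comp
                  ((measurable_snd.mul (hAmeas.comp measurable_fst)).neg)))).aemeasurable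
            rw [hswap]
            calc ∫⁻ s in Ioi (0:ℝ), ∫⁻ z, (ENNReal.ofReal (B z))^2
                    * ENNReal.ofReal (Real.exp (-(s * A z))) ∂μ
                ≤ ∫⁻ s in Ioi (0:ℝ), ENNReal.ofReal (2*((d:ℝ)-(k:ℝ)+3)^2)
                    * ENNReal.ofReal ((2*s+1) ^ (-(k:ℝ)/2)) := by
                  apply lintegral_mono_ae
                  refine (ae_restrict_iff' measurableSet_Ioi).2 (ae_of_all _ fun s hs => ?_)
                  have := inner_bound d k hk3 hkd s hs
                  rw [hμdef, hγdef, hAdef, hBdef]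
                  exact this
              _ = ENNReal.ofReal (2*((d:ℝ)-(k:ℝ)+3)^2) * ENNReal.ofReal (1/((k:ℝ)-2)) := by
                  rw [lintegral_const_mul _ (by fun_prop), rpow_int hk3]
          calc 2 * (ENNReal.ofReal (c^2))⁻¹
                * ∫⁻ z, (ENNReal.ofReal (B z))^2 * (ENNReal.ofReal (A z))⁻¹ ∂μ
              ≤ 2 * (ENNReal.ofReal (c^2))⁻¹
                * (ENNReal.ofReal (2*((d:ℝ)-(k:ℝ)+3)^2) * ENNReal.ofReal (1/((k:ℝ)-2))) :=
                mul_le_mul_right hcore _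
            _ = ENNReal.ofReal (4*((d:ℝ)-(k:ℝ)+3)^2/(c^2*((k:ℝ)-2))) := by
                rw [← ENNReal.ofReal_inv_of_pos (by positivity : (0:ℝ) < c^2),
                  show (2:ℝ≥0∞) = ENNReal.ofReal 2 by simp,
                  ← ENNReal.ofReal_mul (by norm_num),
                  ← ENNReal.ofReal_mul (by positivity),
                  ← ENNReal.ofReal_mul (by positivity)]
                apply congr_arg
                rw [div_eq_mul_inv]
                field_simp
                ring
    _ = ENNReal.ofReal (8*((k:ℝ)+4) + 4*((d:ℝ)-(k:ℝ)+3)^2/(c^2*((k:ℝ)-2))) := by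
        rw [ENNReal.ofReal_add (by positivity) (div_nonneg (by positivity)
          (mul_nonneg (by positivity) (by linarith)))]
end

section
/- Let x₁,…,xₙ and y₁,…,yₙ be vectors in ℝ^d with n < m < d/2. An orthogonal projection Π onto an m-dimensional subspace of ℝ^d satisfies Πxᵢ = yᵢ for all i if and only if (1) span{y₁,…,yₙ} is orthogonal to span{x₁-y₁,…,xₙ-yₙ}, and (2) Π = V₁V₁ᵀ + V₂UUᵀV₂ᵀ, where V₁ has orthonormal columns forming a basis of Y = span{yᵢ}, V₂ has orthonormal columns forming a basis of (Y ⊕ Z)^⊥ with Z = span{xᵢ-yᵢ}, and U is any matrix of appropriate size with orthonormal columns. -/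
open Matrix Submodule Set

noncomputable section StmtAux

variable {d k : ℕ}

/-- the `j`-th column of a matrix, as a Euclidean vector -/
def ecol (V : Matrix (Fin d) (Fin k) ℝ) (j : Fin k) : EuclideanSpace ℝ (Fin d) := WithLp.toLp 2 (fun i => V i j)

/-- identity coercion from plain vectors to Euclidean space -/
def toEuc (v : Fin d → ℝ) : EuclideanSpace ℝ (Fin d) := WithLp.toLp 2 v

@[simp] lemma toEuc_zero : toEuc (0 : Fin d → ℝ) = 0 := by simp [toEuc]

lemma inner_euc (u v : EuclideanSpace ℝ (Fin d)) : (inner ℝ u v : ℝ) = ∑ i, u i * v i := by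
  simp [PiLp.inner_apply, RCLike.inner_apply, mul_comm]

lemma transpose_mulVec_eq_inner (V : Matrix (Fin d) (Fin k) ℝ) (v : EuclideanSpace ℝ (Fin d))
    (j : Fin k) : Vᵀ.mulVec v j = (inner ℝ (ecol V j) v : ℝ) := by
  simp [inner_euc, Matrix.mulVec, dotProduct, ecol]

lemma col_mul {a b c : ℕ} (M : Matrix (Fin a) (Fin b) ℝ) (N : Matrix (Fin b) (Fin c) ℝ)
    (j : Fin c) (i : Fin a) : (M * N) i j = M.mulVec (fun i' => N i' j) i := by
  simp [Matrix.mul_apply, Matrix.mulVec, dotProduct]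

lemma proj_fix (V : Matrix (Fin d) (Fin k) ℝ) (hV : Vᵀ * V = 1)
    (v : EuclideanSpace ℝ (Fin d)) (hv : v ∈ span ℝ (range (ecol V))) :
    V.mulVec (Vᵀ.mulVec v) = v := by
  rw [mem_span_range_iff_exists_fun] at hv
  obtain ⟨c, hc⟩ := hv
  have hc' : (∑ j, c j • (fun i => V i j : Fin d → ℝ)) = (v : Fin d → ℝ) := by
    rw [← hc]; ext i; simp [ecol, WithLp.ofLp_sum]
  have hvc : v.ofLp = V.mulVec c := by
    funext i
    rw [← hc']
    simp [Matrix.mulVec, dotProduct, Finset.sum_apply, mul_comm]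
  rw [hvc, Matrix.mulVec_mulVec, Matrix.mulVec_mulVec, Matrix.mul_assoc, hV, Matrix.mul_one]

lemma ker_part (V : Matrix (Fin d) (Fin k) ℝ) (v : EuclideanSpace ℝ (Fin d))
    (h : ∀ j, (inner ℝ (ecol V j) v : ℝ) = 0) : Vᵀ.mulVec v = 0 := by
  funext j; rw [transpose_mulVec_eq_inner]; exact h j

lemma basis_matrix_orth (K : Submodule ℝ (EuclideanSpace ℝ (Fin d)))
    (b : OrthonormalBasis (Fin k) ℝ K) :
    (Matrix.of fun i j => (b j : EuclideanSpace ℝ (Fin d)) i)ᵀ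
      * (Matrix.of fun i j => (b j : EuclideanSpace ℝ (Fin d)) i) = 1 := by
  ext j l
  have hb := b.orthonormal
  rw [orthonormal_iff_ite] at hb
  have h := hb j l
  rw [Submodule.coe_inner, inner_euc] at h
  simp only [Matrix.mul_apply, Matrix.transpose_apply, Matrix.one_apply]
  simpa using h

lemma basis_matrix_span (K : Submodule ℝ (EuclideanSpace ℝ (Fin d)))
    (b : OrthonormalBasis (Fin k) ℝ K) :
    span ℝ (range (ecol (Matrix.of fun i j => (b j : EuclideanSpace ℝ (Fin d)) i))) = K := by
  have : range (ecol (Matrix.of fun i j => (b j : EuclideanSpace ℝ (Fin d)) i))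
      = K.subtype '' (range b) := by
    ext v; constructor
    · rintro ⟨j, rfl⟩; exact ⟨b j, ⟨j, rfl⟩, by ext i; simp [ecol]⟩
    · rintro ⟨w, ⟨j, rfl⟩, rfl⟩; exact ⟨j, by ext i; simp [ecol]⟩
  rw [this, Submodule.span_image, ← b.coe_toBasis, b.toBasis.span_eq, Submodule.map_top,
    Submodule.range_subtype]

lemma euc_mulVec_add {a b : ℕ} (M : Matrix (Fin a) (Fin b) ℝ) (u w : EuclideanSpace ℝ (Fin b)) :
    M.mulVec (u + w) = M.mulVec u + M.mulVec w := Matrix.mulVec_add M u w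

lemma euc_mulVec_sub {a b : ℕ} (M : Matrix (Fin a) (Fin b) ℝ) (u w : EuclideanSpace ℝ (Fin b)) :
    M.mulVec (u - w) = M.mulVec u - M.mulVec w := Matrix.mulVec_sub M u w

lemma matrix_ext_of_mulVec {a b : ℕ} {M N : Matrix (Fin a) (Fin b) ℝ}
    (h : ∀ v : Fin b → ℝ, M.mulVec v = N.mulVec v) : M = N := by
  ext i j
  have := congrFun (h (Pi.single j 1)) i
  simpa [Matrix.mulVec_single] using this

end StmtAux

/-- Characterization of rank-m orthogonal projections Π with Πxᵢ = yᵢ: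
given that Π is a symmetric idempotent of rank m (n < m < d/2), Πxᵢ = yᵢ for all i iff
(1) span{yᵢ} ⟂ span{xᵢ - yᵢ}, and
(2) Π = V₁V₁ᵀ + V₂UUᵀV₂ᵀ with V₁ an orthonormal basis matrix of Y = span{yᵢ},
V₂ an orthonormal basis matrix of (Y ⊔ Z)ᗮ where Z = span{xᵢ-yᵢ}, and U any matrix
with orthonormal columns of the appropriate size. -/
theorem stmt_18 (d n m : ℕ) (hnm : n < m) (hmd : 2 * m < d)
    (x y : Fin n → EuclideanSpace ℝ (Fin d))
    (P : Matrix (Fin d) (Fin d) ℝ)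
    (hsym : Pᵀ = P) (hidem : P * P = P) (hrank : P.rank = m) :
    (∀ i, Matrix.toEuclideanLin P (x i) = y i) ↔
      ((∀ u ∈ span ℝ (range y), ∀ w ∈ span ℝ (range fun i => x i - y i),
          (inner ℝ u w : ℝ) = 0)
        ∧ ∃ (V₁ : Matrix (Fin d) (Fin (Module.finrank ℝ (span ℝ (range y)))) ℝ)
            (V₂ : Matrix (Fin d)
              (Fin (d - Module.finrank ℝ (span ℝ (range y))
                - Module.finrank ℝ (span ℝ (range fun i => x i - y i)))) ℝ)
            (U : Matrix
              (Fin (d - Module.finrank ℝ (span ℝ (range y))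
                - Module.finrank ℝ (span ℝ (range fun i => x i - y i))))
              (Fin (m - Module.finrank ℝ (span ℝ (range y)))) ℝ),
          V₁ᵀ * V₁ = 1 ∧ V₂ᵀ * V₂ = 1 ∧ Uᵀ * U = 1
          ∧ span ℝ (range fun j => (WithLp.toLp 2 (fun i => V₁ i j) : EuclideanSpace ℝ (Fin d)))
              = span ℝ (range y)
          ∧ span ℝ (range fun j => (WithLp.toLp 2 (fun i => V₂ i j) : EuclideanSpace ℝ (Fin d)))
              = (span ℝ (range y) ⊔ span ℝ (range fun i => x i - y i))ᗮ
          ∧ P = V₁ * V₁ᵀ + V₂ * U * Uᵀ * V₂ᵀ) := by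
  set Y := span ℝ (range y) with hYdef
  set Z := span ℝ (range fun i => x i - y i) with hZdef
  constructor
  · -- forward direction
    intro h
    have hx : ∀ i, P.mulVec (x i) = y i := fun i => congrArg WithLp.ofLp (h i)
    have hPP : ∀ v : EuclideanSpace ℝ (Fin d), P.mulVec (P.mulVec v) = P.mulVec v := by
      intro v; rw [Matrix.mulVec_mulVec, hidem]
    have hy : ∀ i, P.mulVec (y i) = y i := fun i => by rw [← hx i, hPP]
    have hz : ∀ i, P.mulVec (x i - y i) = 0 := by
      intro i
      rw [euc_mulVec_sub, hx, hy, sub_self]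
    have hsymP : ∀ i j, P i j = P j i := by
      intro i j
      conv_lhs => rw [← hsym]
      rfl
    have hsymm : ∀ u v : EuclideanSpace ℝ (Fin d),
        (inner ℝ (toEuc (P.mulVec u)) v : ℝ) = inner ℝ u (toEuc (P.mulVec v)) := by
      intro u v
      rw [inner_euc, inner_euc]
      simp only [toEuc, WithLp.ofLp_toLp, Matrix.mulVec, dotProduct, Finset.sum_mul, Finset.mul_sum]
      rw [Finset.sum_comm]
      refine Finset.sum_congr rfl fun j _ => Finset.sum_congr rfl fun i _ => ?_
      rw [hsymP i j]; ring
    -- the range of P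
    set Pl := Matrix.toEuclideanLin P with hPl
    set K := LinearMap.range Pl with hKdef
    have hPlmv : ∀ v, Pl v = toEuc (P.mulVec v) := fun v => rfl
    have hrankK : Module.finrank ℝ K = m := by
      rw [← hrank, Matrix.rank_eq_finrank_range_toLin P (PiLp.basisFun 2 ℝ (Fin d))
        (PiLp.basisFun 2 ℝ (Fin d))]
      rw [hKdef, hPl, Matrix.toEuclideanLin_eq_toLin]
    have hYK : Y ≤ K := by
      rw [hYdef, span_le]
      rintro _ ⟨i, rfl⟩
      exact ⟨x i, h i⟩
    have hZker : ∀ w ∈ Z, P.mulVec w = 0 := by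
      have hle : Z ≤ LinearMap.ker Pl := by
        rw [hZdef, span_le]
        rintro _ ⟨i, rfl⟩
        show Pl (x i - y i) = 0
        rw [hPlmv, WithLp.ofLp_sub, hz i, toEuc_zero]
      intro w hw
      have h0 : Pl w = 0 := hle hw
      rw [hPlmv] at h0
      simpa [toEuc] using congrArg WithLp.ofLp h0
    have hKv : ∀ v ∈ K, P.mulVec v = v := by
      rintro _ ⟨u, rfl⟩
      exact hPP u
    have hKorth : ∀ v ∈ Kᗮ, P.mulVec v = 0 := by
      intro v hv
      have h2 : (inner ℝ (toEuc (P.mulVec v)) (toEuc (P.mulVec v)) : ℝ) = 0 := by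
        rw [hsymm]
        have hpp : P.mulVec (toEuc (P.mulVec v)) = P.mulVec v := hPP v
        rw [hpp, real_inner_comm]
        exact (Submodule.mem_orthogonal K v).mp hv _ ⟨v, rfl⟩
      have h3 : toEuc (P.mulVec v) = 0 := inner_self_eq_zero.mp h2
      simpa [toEuc] using congrArg WithLp.ofLp h3
    -- orthogonality of Y and Z
    have hYZ : ∀ u ∈ Y, ∀ w ∈ Z, (inner ℝ u w : ℝ) = 0 := by
      have hYZo : Y ⟂ Z := by
        rw [hYdef, hZdef]
        rw [Submodule.isOrtho_span]
        rintro _ ⟨i, rfl⟩ _ ⟨j, rfl⟩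
        calc (inner ℝ (y i) (x j - y j) : ℝ)
            = inner ℝ (toEuc (P.mulVec (y i))) (x j - y j) := by rw [hy]; rfl
          _ = inner ℝ (y i) (toEuc (P.mulVec (x j - y j))) := hsymm _ _
          _ = 0 := by rw [hz, toEuc_zero, inner_zero_right]
      intro u hu w hw
      exact (Submodule.mem_orthogonal' Z u).mp (hYZo hu) w hw
    refine ⟨hYZ, ?_⟩
    -- the intermediate space W
    set W := Yᗮ ⊓ K with hWdef
    have hYW : Y ⊔ W = K := Submodule.sup_orthogonal_inf_of_hasOrthogonalProjection hYK
    have hYWbot : Y ⊓ W = ⊥ := by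
      rw [eq_bot_iff]
      intro v hv
      exact (Submodule.orthogonal_disjoint Y).le_bot ⟨hv.1, hv.2.1⟩
    have hfr := Submodule.finrank_sup_add_finrank_inf_eq Y W
    rw [hYW, hYWbot, hrankK, finrank_bot] at hfr
    have hWrank : Module.finrank ℝ W = m - Module.finrank ℝ Y := by omega
    have hYZbot : Y ⊓ Z = ⊥ := by
      rw [eq_bot_iff]
      intro v hv
      have : (inner ℝ v v : ℝ) = 0 := hYZ v hv.1 v hv.2
      simpa using inner_self_eq_zero.mp this
    have hfr2 := Submodule.finrank_sup_add_finrank_inf_eq Y Z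
    rw [hYZbot, finrank_bot] at hfr2
    have hfr3 := Submodule.finrank_add_finrank_orthogonal (𝕜 := ℝ) (Y ⊔ Z)
    rw [finrank_euclideanSpace_fin] at hfr3
    have hYZrank : Module.finrank ℝ ((Y ⊔ Z)ᗮ : Submodule ℝ (EuclideanSpace ℝ (Fin d)))
        = d - Module.finrank ℝ Y - Module.finrank ℝ Z := by omega
    have hWle : W ≤ (Y ⊔ Z)ᗮ := by
      rintro w ⟨hw1, hw2⟩
      rw [Submodule.mem_orthogonal]
      intro u hu
      obtain ⟨a, ha, b, hb, rfl⟩ := Submodule.mem_sup.mp hu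
      rw [inner_add_left]
      have h1 : (inner ℝ a w : ℝ) = 0 := (Submodule.mem_orthogonal Y w).mp hw1 a ha
      have h2 : (inner ℝ b w : ℝ) = 0 := by
        obtain ⟨t, ht⟩ := hw2
        calc (inner ℝ b w : ℝ) = inner ℝ b (toEuc (P.mulVec t)) := by rw [← ht]; rfl
          _ = inner ℝ (toEuc (P.mulVec b)) t := (hsymm b t).symm
          _ = 0 := by rw [hZker b hb, toEuc_zero, inner_zero_left]
      rw [h1, h2, add_zero]
    -- orthonormal bases
    set b₁ := stdOrthonormalBasis ℝ Y with hb₁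
    set b₂ := (stdOrthonormalBasis ℝ ((Y ⊔ Z)ᗮ : Submodule ℝ (EuclideanSpace ℝ (Fin d)))).reindex
      (finCongr hYZrank) with hb₂
    set b₃ := (stdOrthonormalBasis ℝ W).reindex (finCongr hWrank) with hb₃
    set V₁ : Matrix (Fin d) (Fin (Module.finrank ℝ Y)) ℝ :=
      Matrix.of fun i j => (b₁ j : EuclideanSpace ℝ (Fin d)) i with hV₁def
    set V₂ : Matrix (Fin d) (Fin (d - Module.finrank ℝ Y - Module.finrank ℝ Z)) ℝ :=
      Matrix.of fun i j => (b₂ j : EuclideanSpace ℝ (Fin d)) i with hV₂def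
    set B : Matrix (Fin d) (Fin (m - Module.finrank ℝ Y)) ℝ :=
      Matrix.of fun i j => (b₃ j : EuclideanSpace ℝ (Fin d)) i with hBdef
    have hV₁o : V₁ᵀ * V₁ = 1 := basis_matrix_orth Y b₁
    have hV₂o : V₂ᵀ * V₂ = 1 := basis_matrix_orth _ b₂
    have hBo : Bᵀ * B = 1 := basis_matrix_orth W b₃
    have hV₁s : span ℝ (range (ecol V₁)) = Y := basis_matrix_span Y b₁
    have hV₂s : span ℝ (range (ecol V₂)) = (Y ⊔ Z)ᗮ := basis_matrix_span _ b₂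
    have hBs : span ℝ (range (ecol B)) = W := basis_matrix_span W b₃
    set U : Matrix (Fin (d - Module.finrank ℝ Y - Module.finrank ℝ Z))
      (Fin (m - Module.finrank ℝ Y)) ℝ := V₂ᵀ * B with hUdef
    have hVU : V₂ * U = B := by
      ext i j
      rw [hUdef, col_mul]
      have hcol : (fun i' => (V₂ᵀ * B) i' j) = V₂ᵀ.mulVec (ecol B j) := by
        funext i'; rw [col_mul]; rfl
      rw [hcol]
      have hmem : ecol B j ∈ span ℝ (range (ecol V₂)) := by
        rw [hV₂s]
        have hBj : ecol B j ∈ span ℝ (range (ecol B)) := subset_span ⟨j, rfl⟩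
        rw [hBs] at hBj
        exact hWle hBj
      rw [proj_fix V₂ hV₂o (ecol B j) hmem]
      rfl
    have hUo : Uᵀ * U = 1 := by
      rw [hUdef, Matrix.transpose_mul, Matrix.transpose_transpose, Matrix.mul_assoc,
        ← hUdef, hVU, hBo]
    have hBB : V₂ * U * Uᵀ * V₂ᵀ = B * Bᵀ := by
      rw [Matrix.mul_assoc (V₂ * U), ← Matrix.transpose_mul, hVU]
    refine ⟨V₁, V₂, U, hV₁o, hV₂o, hUo, hV₁s, hV₂s, ?_⟩
    rw [hBB]
    -- prove matrix identity via action on vectors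
    apply matrix_ext_of_mulVec
    intro v0
    set v : EuclideanSpace ℝ (Fin d) := WithLp.toLp 2 v0 with hv0
    have hq : v - (orthogonalProjection K v : EuclideanSpace ℝ (Fin d)) ∈ Kᗮ :=
      Submodule.sub_starProjection_mem_orthogonal (K := K) v
    set p : EuclideanSpace ℝ (Fin d) := (orthogonalProjection K v : EuclideanSpace ℝ (Fin d))
      with hpdef
    set q : EuclideanSpace ℝ (Fin d) := v - p with hqdef
    have hpK : p ∈ K := (orthogonalProjection K v).2
    have hpYW : p ∈ Y ⊔ W := by rw [hYW]; exact hpK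
    obtain ⟨a, ha, b, hb, hab⟩ := Submodule.mem_sup.mp hpYW
    have hveq : v = a + b + q := by rw [hqdef, hab]; abel
    have haK : a ∈ K := hYK ha
    have hbK : b ∈ K := by rw [← hYW]; exact Submodule.mem_sup_right hb
    -- inner product facts
    have hcolV₁ : ∀ j, ecol V₁ j ∈ Y := fun j => (b₁ j).2
    have hcolB : ∀ j, ecol B j ∈ W := fun j => (b₃ j).2
    have hV₁tb : V₁ᵀ.mulVec b = 0 := by
      apply ker_part
      intro j
      exact (Submodule.mem_orthogonal Y b).mp hb.1 _ (hcolV₁ j)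
    have hV₁tq : V₁ᵀ.mulVec q = 0 := by
      apply ker_part
      intro j
      exact (Submodule.mem_orthogonal K q).mp hq _ (hYK (hcolV₁ j))
    have hBta : Bᵀ.mulVec a = 0 := by
      apply ker_part
      intro j
      rw [real_inner_comm]
      exact (Submodule.mem_orthogonal Y (ecol B j)).mp (hcolB j).1 a ha
    have hBtq : Bᵀ.mulVec q = 0 := by
      apply ker_part
      intro j
      refine (Submodule.mem_orthogonal K q).mp hq _ ?_
      rw [← hYW]; exact Submodule.mem_sup_right (hcolB j)
    calc P.mulVec v = P.mulVec a + P.mulVec b + P.mulVec q := by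
          rw [hveq, WithLp.ofLp_add, WithLp.ofLp_add, Matrix.mulVec_add, Matrix.mulVec_add]
      _ = a + b := by
          rw [hKv a haK, hKv b hbK, hKorth q hq, add_zero]
      _ = (V₁ * V₁ᵀ + B * Bᵀ).mulVec v := by
          have e1 : V₁ᵀ.mulVec v = V₁ᵀ.mulVec a := by
            rw [hveq, WithLp.ofLp_add, WithLp.ofLp_add, Matrix.mulVec_add, Matrix.mulVec_add, hV₁tb, hV₁tq, add_zero, add_zero]
          have e2 : Bᵀ.mulVec v = Bᵀ.mulVec b := by
            rw [hveq, WithLp.ofLp_add, WithLp.ofLp_add, Matrix.mulVec_add, Matrix.mulVec_add, hBta, hBtq, add_zero, zero_add]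
          have ma : a ∈ span ℝ (range (ecol V₁)) := by rw [hV₁s]; exact ha
          have mb : b ∈ span ℝ (range (ecol B)) := by rw [hBs]; exact hb
          rw [Matrix.add_mulVec, ← Matrix.mulVec_mulVec, ← Matrix.mulVec_mulVec, e1, e2,
            proj_fix V₁ hV₁o a ma, proj_fix B hBo b mb]
  · -- backward direction
    rintro ⟨hortho, V₁, V₂, U, hV₁o, hV₂o, hUo, hsp₁, hsp₂, hPeq⟩
    intro i
    show WithLp.toLp 2 (P.mulVec (x i)) = y i
    have hsp₁' : span ℝ (range (ecol V₁)) = Y := hsp₁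
    have hsp₂' : span ℝ (range (ecol V₂)) = (Y ⊔ Z)ᗮ := hsp₂
    have hyY : y i ∈ Y := subset_span ⟨i, rfl⟩
    have hzZ : x i - y i ∈ Z := subset_span ⟨i, rfl⟩
    have hxsplit : x i = y i + (x i - y i) := by abel
    have h2 : V₂ᵀ.mulVec (x i) = 0 := by
      apply ker_part
      intro j
      have hc : ecol V₂ j ∈ span ℝ (range (ecol V₂)) := subset_span ⟨j, rfl⟩
      rw [hsp₂'] at hc
      have hxm : x i ∈ Y ⊔ Z := by
        rw [hxsplit]
        exact add_mem (Submodule.mem_sup_left hyY) (Submodule.mem_sup_right hzZ)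
      rw [real_inner_comm]
      exact (Submodule.mem_orthogonal (Y ⊔ Z) _).mp hc _ hxm
    have h1 : V₁ᵀ.mulVec (x i - y i : EuclideanSpace ℝ (Fin d)) = 0 := by
      apply ker_part
      intro j
      have hc : ecol V₁ j ∈ span ℝ (range (ecol V₁)) := subset_span ⟨j, rfl⟩
      rw [hsp₁'] at hc
      exact hortho _ hc _ hzZ
    rw [hPeq, Matrix.add_mulVec, ← Matrix.mulVec_mulVec]
    rw [show (V₂ * U * Uᵀ * V₂ᵀ : Matrix (Fin d) (Fin d) ℝ) = V₂ * U * Uᵀ * V₂ᵀ from rfl]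
    rw [← Matrix.mulVec_mulVec (M := V₂ * U * Uᵀ), h2, Matrix.mulVec_zero, add_zero]
    have hVx : V₁ᵀ.mulVec (x i) = V₁ᵀ.mulVec (y i) := by
      conv_lhs => rw [hxsplit]
      rw [WithLp.ofLp_add, Matrix.mulVec_add, h1, add_zero]
    have hyY' : y i ∈ span ℝ (range (ecol V₁)) := by rw [hsp₁']; exact hyY
    rw [hVx, proj_fix V₁ hV₁o (y i) hyY']
end
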